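/- arXiv:2201.08100 — 4 statements merged into one kernel-verified Lean document; each statement's English description precedes it below -/
import Mathlib

section
/- For n ≥ 1 and k ≥ 0, the generating function A(k,n;t) := Σ_q |⊔_{j≤k} I(j,n)_q| t^q, counting by dimension the completely unadmissible sequences of length at most k and excess n, satisfies A(k+1, n; t) = A(k+1, n+1; t) + A(k, 2n+1; t) · t^{n−1}. -/
/-- A list `(i₁, …, i_k)` of positive integers is completely unadmissible of excess `n`
if `i_k ≥ n` and `i_j ≥ 2·i_{j+1} + 1` for all `j < k`. -/
def IsCU (n : ℕ) (l : List ℕ) : Prop :=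
  (∀ x ∈ l, 0 < x) ∧ (∀ h : l ≠ [], n ≤ l.getLast h) ∧
    ∀ m : ℕ, (hm : m + 1 < l.length) →
      2 * l.get ⟨m + 1, hm⟩ + 1 ≤ l.get ⟨m, Nat.lt_of_succ_lt hm⟩

/-- The dimension of `(i₁, …, i_k)` is `Σ_j (i_j − 1)`. -/
def dimCU (l : List ℕ) : ℕ := (l.map (· - 1)).sum

/-- The coefficient of `t^q` in `A(k,n;t)`: the number of completely unadmissible
sequences of excess `n`, length at most `k`, and dimension `q`. -/
noncomputable def cuCount (k n q : ℕ) : ℕ :=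
  Nat.card {l : List ℕ // l.length ≤ k ∧ IsCU n l ∧ dimCU l = q}

private lemma isCU_iff (n : ℕ) (l : List ℕ) :
    IsCU n l ↔ (∀ x ∈ l, 0 < x) ∧ (∀ h : l ≠ [], n ≤ l.getLast h) ∧
      l.Chain' (fun a b => 2 * b + 1 ≤ a) := by
  unfold IsCU
  unfold List.Chain'
  rw [List.isChain_iff_getElem]
  exact ⟨fun ⟨h1, h2, h3⟩ => ⟨h1, h2, fun i h => h3 i (by omega)⟩,
    fun ⟨h1, h2, h3⟩ => ⟨h1, h2, fun m hm => h3 m (by omega)⟩⟩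

private lemma cu_finite (k n q : ℕ) :
    {l : List ℕ | l.length ≤ k ∧ IsCU n l ∧ dimCU l = q}.Finite := by
  have hS : {l : List ℕ | l.length ≤ k ∧ ∀ x ∈ l, x < q + 2}.Finite := by
    have h1 : {l : List (Fin (q + 2)) | l.length ≤ k}.Finite := List.finite_length_le _ _
    apply (h1.image (List.map Fin.val)).subset
    rintro l ⟨hl, hb⟩
    refine ⟨l.pmap (fun x hx => (⟨x, hx⟩ : Fin (q + 2))) hb, by simpa using hl, ?_⟩
    simp [List.map_pmap]
  apply hS.subset
  rintro l ⟨hl, hcu, hd⟩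
  refine ⟨hl, fun x hx => ?_⟩
  have : x - 1 ≤ dimCU l :=
    List.single_le_sum (fun y _ => Nat.zero_le y) _ (List.mem_map_of_mem hx)
  omega

private lemma cuCount_eq_ncard (k n q : ℕ) :
    cuCount k n q = {l : List ℕ | l.length ≤ k ∧ IsCU n l ∧ dimCU l = q}.ncard := rfl

private lemma dim_append (l : List ℕ) (n : ℕ) : dimCU (l ++ [n]) = dimCU l + (n - 1) := by
  simp [dimCU]

private lemma isCU_append (n : ℕ) (hn : 1 ≤ n) (l : List ℕ) (h : IsCU (2 * n + 1) l) :
    IsCU n (l ++ [n]) := by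
  rw [isCU_iff] at h ⊢
  obtain ⟨h1, h2, h3⟩ := h
  refine ⟨?_, ?_, ?_⟩
  · intro x hx
    rcases List.mem_append.mp hx with h | h
    · exact h1 x h
    · simp at h; omega
  · intro _; simp [List.getLast_append]
  · unfold List.Chain'
    rw [List.isChain_append]
    refine ⟨h3, List.isChain_singleton _, fun x hx y hy => ?_⟩
    simp only [List.head?, Option.mem_some_iff] at hy
    subst hy
    have hne : l ≠ [] := by rintro rfl; simp at hx
    rw [List.getLast?_eq_getLast hne, Option.mem_some_iff] at hx
    subst hx
    exact h2 hne

private lemma isCU_dropLast (n : ℕ) (l : List ℕ) (hne : l ≠ []) (h : IsCU n l)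
    (hlast : l.getLast hne = n) : IsCU (2 * n + 1) l.dropLast := by
  rw [isCU_iff] at h ⊢
  obtain ⟨h1, h2, h3⟩ := h
  have hdec : l = l.dropLast ++ [n] := by
    conv_lhs => rw [← l.dropLast_append_getLast hne]
    rw [hlast]
  refine ⟨fun x hx => h1 x ((List.dropLast_prefix l).subset hx), ?_, h3.prefix l.dropLast_prefix⟩
  intro hne'
  unfold List.Chain' at h3
  rw [hdec, List.isChain_append] at h3
  have := h3.2.2 (l.dropLast.getLast hne') (by rw [List.getLast?_eq_getLast hne']; rfl) n (by simp)
  omega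

private lemma dim_ge (n : ℕ) (l : List ℕ) (hne : l ≠ []) (hlast : l.getLast hne = n) :
    n - 1 ≤ dimCU l := by
  have hmem : n ∈ l := hlast ▸ List.getLast_mem hne
  exact List.single_le_sum (fun y _ => Nat.zero_le y) _ (List.mem_map_of_mem hmem)

private lemma isCU_mono (n : ℕ) (l : List ℕ) (h : IsCU (n + 1) l) : IsCU n l := by
  obtain ⟨h1, h2, h3⟩ := h
  exact ⟨h1, fun hne => le_trans (Nat.le_succ n) (h2 hne), h3⟩

private lemma cu_rec (n k q : ℕ) (hn : 1 ≤ n) :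
    cuCount (k + 1) n q = cuCount (k + 1) (n + 1) q +
      if n - 1 ≤ q then cuCount k (2 * n + 1) (q - (n - 1)) else 0 := by
  rw [cuCount_eq_ncard, cuCount_eq_ncard]
  set A1 : Set (List ℕ) := {l | l.length ≤ k + 1 ∧ IsCU (n + 1) l ∧ dimCU l = q} with hA1
  set A2 : Set (List ℕ) :=
    {l | l.length ≤ k + 1 ∧ IsCU n l ∧ dimCU l = q ∧ ∃ hne : l ≠ [], l.getLast hne = n}
    with hA2
  have hsplit : {l : List ℕ | l.length ≤ k + 1 ∧ IsCU n l ∧ dimCU l = q} = A1 ∪ A2 := by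
    ext l
    simp only [hA1, hA2, Set.mem_setOf_eq, Set.mem_union]
    constructor
    · rintro ⟨hlen, hcu, hdim⟩
      by_cases hne : l = []
      · subst hne
        exact Or.inl ⟨hlen, ⟨by simp, by simp, by simp [IsCU] at hcu ⊢⟩, hdim⟩
      · by_cases hlast : l.getLast hne = n
        · exact Or.inr ⟨hlen, hcu, hdim, hne, hlast⟩
        · refine Or.inl ⟨hlen, ⟨hcu.1, fun h => ?_, hcu.2.2⟩, hdim⟩
          have := hcu.2.1 hne
          omega
    · rintro (⟨hlen, hcu, hdim⟩ | ⟨hlen, hcu, hdim, _⟩)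
      · exact ⟨hlen, isCU_mono n l hcu, hdim⟩
      · exact ⟨hlen, hcu, hdim⟩
  have hdisj : Disjoint A1 A2 := by
    rw [Set.disjoint_left]
    rintro l ⟨_, hcu1, _⟩ ⟨_, _, _, hne, hlast⟩
    have := hcu1.2.1 hne
    omega
  have hfin1 : A1.Finite := cu_finite (k + 1) (n + 1) q
  have hfin2 : A2.Finite := by
    apply (cu_finite (k + 1) n q).subset
    rintro l ⟨hlen, hcu, hdim, _⟩
    exact ⟨hlen, hcu, hdim⟩
  rw [hsplit, Set.ncard_union_eq hdisj hfin1 hfin2]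
  congr 1
  by_cases hq : n - 1 ≤ q
  · rw [if_pos hq, cuCount_eq_ncard]
    have himg : A2 = (fun l => l ++ [n]) ''
        {l : List ℕ | l.length ≤ k ∧ IsCU (2 * n + 1) l ∧ dimCU l = q - (n - 1)} := by
      ext l
      simp only [hA2, Set.mem_setOf_eq, Set.mem_image]
      constructor
      · rintro ⟨hlen, hcu, hdim, hne, hlast⟩
        have hdec : l = l.dropLast ++ [n] := by
          conv_lhs => rw [← l.dropLast_append_getLast hne]
          rw [hlast]
        refine ⟨l.dropLast, ⟨?_, isCU_dropLast n l hne hcu hlast, ?_⟩, hdec.symm⟩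
        · have h1 := l.length_dropLast
          have h2 := List.length_pos_iff.mpr hne
          omega
        · have := dim_append l.dropLast n
          rw [← hdec] at this
          omega
      · rintro ⟨l', ⟨hlen, hcu, hdim⟩, rfl⟩
        refine ⟨by simpa using Nat.add_le_add_right hlen 1, isCU_append n hn l' hcu,
          ?_, by simp, ?_⟩
        · rw [dim_append, hdim]; omega
        · simp [List.getLast_append]
    rw [himg, Set.ncard_image_of_injective _ (fun a b h => by simpa using h)]
  · rw [if_neg hq]
    have : A2 = ∅ := by
      ext l
      simp only [hA2, Set.mem_setOf_eq, Set.mem_empty_iff_false, iff_false]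
      rintro ⟨_, _, hdim, hne, hlast⟩
      exact hq (hdim ▸ dim_ge n l hne hlast)
    simp [this]

/-- The Goodwillie-EHP recursion for the generating functions:
`A(k+1, n; t) = A(k+1, n+1; t) + A(k, 2n+1; t) · t^{n−1}`. -/
theorem A_rec (n k : ℕ) (hn : 1 ≤ n) :
    (PowerSeries.mk fun q => (cuCount (k + 1) n q : ℚ)) =
      (PowerSeries.mk fun q => (cuCount (k + 1) (n + 1) q : ℚ)) +
        (PowerSeries.mk fun q => (cuCount k (2 * n + 1) q : ℚ)) *
          (PowerSeries.X : PowerSeries ℚ) ^ (n - 1) := by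
  ext q
  rw [map_add, PowerSeries.coeff_mul_X_pow']
  simp only [PowerSeries.coeff_mk]
  rw [cu_rec n k q hn]
  split_ifs <;> push_cast <;> ring
end

section
/- For n ≥ 1 and k ≥ 0, the generating function A(k,n;t) counting completely unadmissible sequences of excess n and length at most k by dimension satisfies the closed form A(k,n;t) = 1 + Σ_{j=1}^{k} t^{(n+1)(2^j − 1) − 2j} / ∏_{i=1}^{j} (1 − t^{2^i − 1}). -/
/-! ### Basic lemmas about `IsCU` and `dimCU` -/

theorem isCU_nil (n : ℕ) : IsCU n [] := by
  refine ⟨by simp, fun h => absurd rfl h, ?_⟩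
  intro m hm
  simp at hm

theorem isCU_singleton {n a : ℕ} : IsCU n [a] ↔ n ≤ a ∧ 0 < a := by
  constructor
  · rintro ⟨h1, h2, h3⟩
    exact ⟨by simpa using h2 (by simp), h1 a (by simp)⟩
  · rintro ⟨h1, h2⟩
    refine ⟨by simpa using h2, fun h => by simpa using h1, ?_⟩
    intro m hm
    simp at hm

theorem isCU_cons_cons {n a b : ℕ} {t : List ℕ} :
    IsCU n (a :: b :: t) ↔ 2 * b + 1 ≤ a ∧ IsCU n (b :: t) := by
  constructor
  · rintro ⟨h1, h2, h3⟩
    refine ⟨?_, ?_, ?_, ?_⟩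
    · have := h3 0 (by simp)
      simpa using this
    · intro x hx
      exact h1 x (by simp [hx])
    · intro h
      have := h2 (by simp)
      rwa [List.getLast_cons (by simp)] at this
    · intro m hm
      have hm' : (m + 1) + 1 < (a :: b :: t).length := by
        simp only [List.length_cons] at hm ⊢
        omega
      have := h3 (m + 1) hm'
      simpa using this
  · rintro ⟨hab, h1, h2, h3⟩
    refine ⟨?_, ?_, ?_⟩
    · intro x hx
      rcases List.mem_cons.mp hx with rfl | hx
      · omega
      · exact h1 x hx
    · intro h
      rw [List.getLast_cons (by simp)]
      exact h2 (by simp)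
    · intro m hm
      match m with
      | 0 => simpa using hab
      | m + 1 =>
        have hm' : m + 1 < (b :: t).length := by
          simp only [List.length_cons] at hm ⊢
          omega
        have := h3 m hm'
        simpa using this

theorem dimCU_nil : dimCU [] = 0 := rfl

theorem dimCU_cons (a : ℕ) (l : List ℕ) : dimCU (a :: l) = (a - 1) + dimCU l := by
  simp [dimCU]

/-! ### Slack coordinates and the `build` map -/

/-- `hsum (c₁, …, c_j) = Σ_m c_m 2^(m-1)`. -/
def hsum : List ℕ → ℕ
  | [] => 0
  | c :: cs => c + 2 * hsum cs

/-- `wsum (c₁, …, c_j) = Σ_m c_m (2^m - 1)`. -/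
def wsum : List ℕ → ℕ
  | [] => 0
  | c :: cs => c + 2 * wsum cs + cs.sum

/-- The head of the next step of `build`. -/
def nexthd (n c : ℕ) : List ℕ → ℕ
  | [] => n + c
  | h :: _ => 2 * h + 1 + c

@[simp] theorem nexthd_nil (n c : ℕ) : nexthd n c [] = n + c := rfl

@[simp] theorem nexthd_cons (n c h : ℕ) (t : List ℕ) :
    nexthd n c (h :: t) = 2 * h + 1 + c := rfl

/-- Build the CU sequence with excess `n` and slacks `c`. -/
def build (n : ℕ) : List ℕ → List ℕ
  | [] => []
  | c :: cs => nexthd n c (build n cs) :: build n cs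

/-- Recover the slacks of a CU sequence. -/
def slk (n : ℕ) : List ℕ → List ℕ
  | [] => []
  | [a] => [a - n]
  | a :: b :: t => (a - (2 * b + 1)) :: slk n (b :: t)

/-- Dimension of the minimal CU sequence of excess `n` and length `j`. -/
def Dn (n : ℕ) : ℕ → ℕ
  | 0 => 0
  | j + 1 => (2 ^ j * (n + 1) - 2) + Dn n j

theorem wsum_add_sum (c : List ℕ) : wsum c + c.sum = 2 * hsum c := by
  induction c with
  | nil => simp [wsum, hsum]
  | cons a cs ih =>
    simp only [wsum, hsum, List.sum_cons]
    omega

theorem le_wsum {c : List ℕ} {x : ℕ} (hx : x ∈ c) : x ≤ wsum c := by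
  induction c with
  | nil => simp at hx
  | cons a cs ih =>
    rcases List.mem_cons.mp hx with rfl | hx
    · simp [wsum]
      omega
    · have := ih hx
      simp only [wsum]
      omega

theorem build_cons (n x : ℕ) (cs : List ℕ) :
    build n (x :: cs) = nexthd n x (build n cs) :: build n cs := rfl

theorem build_length (n : ℕ) (c : List ℕ) : (build n c).length = c.length := by
  induction c with
  | nil => rfl
  | cons a cs ih => simp [build, ih]

theorem build_head (n : ℕ) : ∀ (c : List ℕ), c ≠ [] →
    (build n c).headD 0 + 1 = 2 ^ (c.length - 1) * (n + 1) + hsum c := by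
  intro c hc
  induction c with
  | nil => exact absurd rfl hc
  | cons x cs ih =>
    cases hcs : cs with
    | nil =>
      subst hcs
      simp [build, hsum]
      omega
    | cons y t =>
      subst hcs
      have hne : build n (y :: t) ≠ [] := by
        intro h
        have := build_length n (y :: t)
        rw [h] at this
        simp at this
      obtain ⟨h, t', hr⟩ : ∃ h t', build n (y :: t) = h :: t' := by
        cases hb : build n (y :: t) with
        | nil => exact absurd hb hne
        | cons h t' => exact ⟨h, t', rfl⟩
      have IH := ih (by simp)
      rw [hr] at IH
      simp only [List.headD_cons, List.length_cons, Nat.add_sub_cancel] at IH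
      rw [build_cons n x (y :: t), hr, nexthd_cons]
      simp only [List.headD_cons, List.length_cons, Nat.add_sub_cancel]
      have e1 : hsum (x :: y :: t) = x + 2 * hsum (y :: t) := rfl
      have hd : 2 ^ (t.length + 1) * (n + 1) = 2 * (2 ^ t.length * (n + 1)) := by ring
      omega

theorem build_isCU (n : ℕ) (hn : 1 ≤ n) (c : List ℕ) : IsCU n (build n c) := by
  induction c with
  | nil => exact isCU_nil n
  | cons x cs ih =>
    cases hb : build n cs with
    | nil =>
      rw [build_cons n x cs, hb, nexthd_nil]
      exact isCU_singleton.mpr ⟨by omega, by omega⟩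
    | cons h t' =>
      rw [build_cons n x cs, hb, nexthd_cons]
      rw [hb] at ih
      exact isCU_cons_cons.mpr ⟨by omega, ih⟩

theorem build_dim (n : ℕ) (hn : 1 ≤ n) : ∀ (c : List ℕ),
    dimCU (build n c) = Dn n c.length + wsum c := by
  intro c
  induction c with
  | nil => simp [build, dimCU, Dn, wsum]
  | cons x cs ih =>
    cases hcs : cs with
    | nil =>
      subst hcs
      simp [build, dimCU, Dn, wsum, nexthd]
      omega
    | cons y t =>
      subst hcs
      obtain ⟨h, t', hr⟩ : ∃ h t', build n (y :: t) = h :: t' := by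
        have hne : build n (y :: t) ≠ [] := by
          intro hE
          have := build_length n (y :: t)
          rw [hE] at this
          simp at this
        cases hb : build n (y :: t) with
        | nil => exact absurd hb hne
        | cons h t' => exact ⟨h, t', rfl⟩
      have hhead := build_head n (y :: t) (by simp)
      rw [hr] at hhead
      simp only [List.headD_cons, List.length_cons, Nat.add_sub_cancel] at hhead
      rw [build_cons n x (y :: t), dimCU_cons, ih, hr, nexthd_cons]
      simp only [List.length_cons] at *
      have hws := wsum_add_sum (y :: t)
      have hA : 2 ≤ 2 ^ t.length * (n + 1) := by
        calc 2 = 1 * 2 := by ring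
        _ ≤ 2 ^ t.length * (n + 1) := Nat.mul_le_mul (Nat.one_le_two_pow) (by omega)
      have e2 : wsum (x :: y :: t) = x + 2 * wsum (y :: t) + (y :: t).sum := rfl
      have e4 : Dn n (t.length + 1 + 1) = (2 ^ (t.length + 1) * (n + 1) - 2) + Dn n (t.length + 1) := rfl
      have hd : 2 ^ (t.length + 1) * (n + 1) = 2 * (2 ^ t.length * (n + 1)) := by ring
      omega

theorem build_slk (n : ℕ) : ∀ l, IsCU n l → build n (slk n l) = l
  | [], _ => rfl
  | [a], h => by
    obtain ⟨h1, _⟩ := isCU_singleton.mp h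
    simp only [slk, build, nexthd_nil]
    congr 1
    omega
  | a :: b :: t, h => by
    obtain ⟨hab, h2⟩ := isCU_cons_cons.mp h
    have IH := build_slk n (b :: t) h2
    show build n ((a - (2 * b + 1)) :: slk n (b :: t)) = a :: b :: t
    rw [build_cons, IH, nexthd_cons]
    congr 1
    omega

theorem slk_build (n : ℕ) : ∀ c, slk n (build n c) = c
  | [] => rfl
  | x :: cs => by
    cases hb : build n cs with
    | nil =>
      have : cs = [] := by
        have := build_length n cs
        rw [hb] at this
        simpa using this.symm
      subst this
      show slk n (build n [x]) = [x]
      rw [build_cons]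
      simp only [build, nexthd_nil, slk]
      congr 1
      omega
    | cons h t' =>
      have IH := slk_build n cs
      rw [hb] at IH
      show slk n (build n (x :: cs)) = x :: cs
      rw [build_cons, hb, nexthd_cons]
      simp only [slk]
      rw [IH]
      congr 1
      omega

/-! ### The function model -/

/-- Weighted sum `Σ_m f m · (2^(m+1) - 1)`. -/
def sw (j : ℕ) (f : Fin j → ℕ) : ℕ := ∑ m : Fin j, f m * (2 ^ (m.1 + 1) - 1)

theorem sw_zero (f : Fin 0 → ℕ) : sw 0 f = 0 := by simp [sw]

theorem le_sw {j : ℕ} (f : Fin j → ℕ) (m : Fin j) : f m ≤ sw j f := by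
  have h1 : f m * (2 ^ (m.1 + 1) - 1) ≤ sw j f :=
    Finset.single_le_sum (f := fun m : Fin j => f m * (2 ^ (m.1 + 1) - 1))
      (fun i _ => Nat.zero_le _) (Finset.mem_univ m)
  have h2 : 2 ≤ 2 ^ (m.1 + 1) := by
    calc 2 = 2 ^ 1 := by ring
    _ ≤ 2 ^ (m.1 + 1) := Nat.pow_le_pow_right (by omega) (by omega)
  have h3 : f m ≤ f m * (2 ^ (m.1 + 1) - 1) := Nat.le_mul_of_pos_right _ (by omega)
  omega

instance swFinite (j r : ℕ) : Finite {f : Fin j → ℕ // sw j f = r} := by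
  apply Finite.of_injective
    (fun f => fun m : Fin j => (⟨f.val m, by
      have h1 := le_sw f.val m
      have h2 := f.prop
      omega⟩ : Fin (r + 1)))
  intro f g hfg
  apply Subtype.ext
  funext m
  have := congrFun hfg m
  simpa [Fin.ext_iff] using this

theorem wsum_ofFn : ∀ (j : ℕ) (f : Fin j → ℕ), wsum (List.ofFn f) = sw j f := by
  intro j
  induction j with
  | zero => intro f; simp [wsum, sw]
  | succ j ih =>
    intro f
    rw [List.ofFn_succ]
    show f 0 + 2 * wsum (List.ofFn fun i : Fin j => f i.succ) +
        (List.ofFn fun i : Fin j => f i.succ).sum = sw (j + 1) f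
    rw [ih, List.sum_ofFn]
    simp only [sw]
    rw [Fin.sum_univ_succ]
    simp only [Fin.val_zero, Fin.val_succ]
    have h0 : f 0 * (2 ^ (0 + 1) - 1) = f 0 := by norm_num
    rw [h0]
    have key : 2 * (∑ m : Fin j, f m.succ * (2 ^ (m.1 + 1) - 1)) + (∑ m : Fin j, f m.succ) =
        ∑ m : Fin j, f m.succ * (2 ^ (m.1 + 1 + 1) - 1) := by
      rw [Finset.mul_sum, ← Finset.sum_add_distrib]
      apply Finset.sum_congr rfl
      intro m _
      have hp : 1 ≤ 2 ^ (m.1 + 1) := Nat.one_le_two_pow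
      have hs : (2 : ℕ) ^ (m.1 + 1 + 1) = 2 * 2 ^ (m.1 + 1) := by ring
      rw [hs]
      zify [hp, show (1:ℕ) ≤ 2 * 2 ^ (m.1 + 1) by omega]
      ring
    omega

/-- Lists of a fixed length with given `wsum` correspond to functions with given `sw`. -/
def listFnEquiv (j r : ℕ) : {c : List ℕ // c.length = j ∧ wsum c = r} ≃
    {f : Fin j → ℕ // sw j f = r} where
  toFun c := ⟨fun m => c.val.get (Fin.cast c.prop.1.symm m), by
    have h2 : List.ofFn (fun m : Fin j => c.val.get (Fin.cast c.prop.1.symm m)) = c.val := by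
      apply List.ext_get (by simp [c.prop.1])
      intro i h1 h1'
      simp [List.get_ofFn]
    have h := wsum_ofFn j (fun m : Fin j => c.val.get (Fin.cast c.prop.1.symm m))
    rw [h2] at h
    rw [← h, c.prop.2]⟩
  invFun f := ⟨List.ofFn f.val, by simp [wsum_ofFn, f.prop]⟩
  left_inv c := by
    apply Subtype.ext
    apply List.ext_get (by simp [c.prop.1])
    intro i h1 h1'
    simp [List.get_ofFn]
  right_inv f := by
    apply Subtype.ext
    funext m
    simp [List.get_ofFn]

/-! ### Counting functions -/

noncomputable def V (j r : ℕ) : ℕ := Nat.card {f : Fin j → ℕ // sw j f = r}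

theorem V_zero (r : ℕ) : V 0 r = if r = 0 then 1 else 0 := by
  rcases eq_or_ne r 0 with rfl | hr
  · rw [if_pos rfl, V]
    haveI : Unique {f : Fin 0 → ℕ // sw 0 f = 0} :=
      ⟨⟨⟨fun m => m.elim0, sw_zero _⟩⟩, by
        intro a
        apply Subtype.ext
        funext m
        exact m.elim0⟩
    exact Nat.card_unique
  · rw [if_neg hr, V]
    haveI : IsEmpty {f : Fin 0 → ℕ // sw 0 f = r} :=
      ⟨fun f => hr (by have := f.prop; rw [sw_zero] at this; omega)⟩
    exact Nat.card_of_isEmpty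

/-- Split off the last coordinate. -/
def snocEquiv (j r : ℕ) : {f : Fin (j + 1) → ℕ // sw (j + 1) f = r} ≃
    {p : (Fin j → ℕ) × ℕ // sw j p.1 + p.2 * (2 ^ (j + 1) - 1) = r} where
  toFun f := ⟨(fun m => f.val m.castSucc, f.val (Fin.last j)), by
    have := f.prop
    rw [sw, Fin.sum_univ_castSucc] at this
    simpa [sw] using this⟩
  invFun p := ⟨Fin.snoc p.val.1 p.val.2, by
    rw [sw, Fin.sum_univ_castSucc]
    simpa [Fin.snoc_castSucc, Fin.snoc_last, sw] using p.prop⟩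
  left_inv f := by
    apply Subtype.ext
    funext m
    refine Fin.lastCases ?_ ?_ m
    · simp [Fin.snoc_last]
    · intro i; simp [Fin.snoc_castSucc]
  right_inv p := by
    apply Subtype.ext
    ext
    · simp [Fin.snoc_castSucc]
    · simp [Fin.snoc_last]

/-- Split off the cases of zero/positive second coordinate. -/
def splitEquiv {β : Type} (T : β → ℕ) (e r : ℕ) (he : e ≤ r) :
    {p : β × ℕ // T p.1 + p.2 * e = r} ≃
      ({b : β // T b = r} ⊕ {p : β × ℕ // T p.1 + p.2 * e = r - e}) where
  toFun p :=
    match p with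
    | ⟨(b, 0), h⟩ => Sum.inl ⟨b, by simpa using h⟩
    | ⟨(b, a + 1), h⟩ => Sum.inr ⟨(b, a), by
        have h' : T b + (a + 1) * e = r := h
        have h2 : (a + 1) * e = a * e + e := by ring
        show T b + a * e = r - e
        omega⟩
  invFun s :=
    match s with
    | Sum.inl ⟨b, h⟩ => ⟨(b, 0), by simpa using h⟩
    | Sum.inr ⟨(b, a), h⟩ => ⟨(b, a + 1), by
        have h' : T b + a * e = r - e := h
        have h2 : (a + 1) * e = a * e + e := by ring
        show T b + (a + 1) * e = r
        omega⟩
  left_inv p := by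
    obtain ⟨⟨b, _ | a⟩, h⟩ := p <;> rfl
  right_inv s := by
    rcases s with ⟨b, h⟩ | ⟨⟨b, a⟩, h⟩ <;> rfl

/-- When `r < e` the second coordinate must vanish. -/
def splitEquivLow {β : Type} (T : β → ℕ) (e r : ℕ) (hr : r < e) :
    {p : β × ℕ // T p.1 + p.2 * e = r} ≃ {b : β // T b = r} where
  toFun p := ⟨p.val.1, by
    obtain ⟨⟨b, a⟩, h⟩ := p
    have h' : T b + a * e = r := h
    show T b = r
    rcases Nat.eq_zero_or_pos a with rfl | ha
    · simpa using h'
    · have : e ≤ a * e := Nat.le_mul_of_pos_left e ha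
      omega⟩
  invFun b := ⟨(b.val, 0), by simpa using b.prop⟩
  left_inv p := by
    obtain ⟨⟨b, a⟩, h⟩ := p
    have h' : T b + a * e = r := h
    have ha : a = 0 := by
      rcases Nat.eq_zero_or_pos a with rfl | ha
      · rfl
      · have : e ≤ a * e := Nat.le_mul_of_pos_left e ha
        omega
    subst ha
    rfl
  right_inv b := rfl

theorem V_succ (j r : ℕ) : V (j + 1) r =
    V j r + if 2 ^ (j + 1) - 1 ≤ r then V (j + 1) (r - (2 ^ (j + 1) - 1)) else 0 := by
  set e := 2 ^ (j + 1) - 1 with he_def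
  have he : 1 ≤ e := by
    have : (2:ℕ) ≤ 2 ^ (j+1) := by
      calc (2:ℕ) = 2 ^ 1 := by ring
      _ ≤ 2 ^ (j + 1) := Nat.pow_le_pow_right (by omega) (by omega)
    omega
  have hcard : ∀ s, V (j + 1) s = Nat.card {p : (Fin j → ℕ) × ℕ // sw j p.1 + p.2 * e = s} :=
    fun s => Nat.card_congr (snocEquiv j s)
  haveI : ∀ s, Finite {p : (Fin j → ℕ) × ℕ // sw j p.1 + p.2 * e = s} :=
    fun s => Finite.of_equiv _ (snocEquiv j s)
  by_cases hr : e ≤ r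
  · rw [hcard r, Nat.card_congr (splitEquiv (sw j) e r hr), Nat.card_sum, if_pos hr,
      hcard (r - e), V]
  · rw [hcard r, Nat.card_congr (splitEquivLow (sw j) e r (by omega)), if_neg hr, V, Nat.add_zero]

/-! ### Finiteness of list models -/

theorem finite_list_subtype (K B : ℕ) (P : List ℕ → Prop)
    (hP : ∀ c, P c → c.length ≤ K ∧ ∀ x ∈ c, x ≤ B) : Finite {c : List ℕ // P c} := by
  apply Finite.of_injective (β := Fin (K + 1) × (Fin K → Fin (B + 1)))
    (fun c => (⟨c.val.length, by have := (hP c.val c.prop).1; omega⟩,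
      fun m => ⟨if hm : m.1 < c.val.length then c.val.get ⟨m.1, hm⟩ else 0, by
        split_ifs with hm
        · have := (hP c.val c.prop).2 _ (c.val.get_mem ⟨m.1, hm⟩)
          omega
        · omega⟩))
  intro c d hcd
  have h1 : c.val.length = d.val.length := by
    have := congrArg (fun p => (Prod.fst p).val) hcd
    simpa using this
  apply Subtype.ext
  apply List.ext_get h1
  intro i hi1 hi2
  have hiK : i < K := by
    have := (hP c.val c.prop).1
    omega
  have h2 := congrArg (fun p => (Prod.snd p ⟨i, hiK⟩).val) hcd
  simpa [dif_pos hi1, dif_pos hi2] using h2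

instance (n k q : ℕ) : Finite {c : List ℕ // c.length ≤ k ∧ Dn n c.length + wsum c = q} :=
  finite_list_subtype k q _ (fun c hc =>
    ⟨hc.1, fun x hx => by have h := le_wsum hx; have := hc.2; omega⟩)

instance (n j q : ℕ) : Finite {c : List ℕ // c.length = j ∧ Dn n j + wsum c = q} :=
  finite_list_subtype j q _ (fun c hc =>
    ⟨le_of_eq hc.1, fun x hx => by have h := le_wsum hx; have := hc.2; omega⟩)

/-! ### Splitting by length -/

def cutEquiv (n q k : ℕ) :
    {c : List ℕ // c.length ≤ k + 1 ∧ Dn n c.length + wsum c = q} ≃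
      ({c : List ℕ // c.length ≤ k ∧ Dn n c.length + wsum c = q} ⊕
       {c : List ℕ // c.length = k + 1 ∧ Dn n (k + 1) + wsum c = q}) where
  toFun c :=
    if h : c.val.length ≤ k then Sum.inl ⟨c.val, h, c.prop.2⟩
    else Sum.inr ⟨c.val, by have := c.prop.1; omega, by
      have h2 := c.prop.2
      have h3 : c.val.length = k + 1 := by have := c.prop.1; omega
      rwa [h3] at h2⟩
  invFun s :=
    match s with
    | Sum.inl c => ⟨c.val, by have := c.prop.1; omega, c.prop.2⟩
    | Sum.inr c => ⟨c.val, by have := c.prop.1; omega, by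
        have h2 := c.prop.2
        rwa [c.prop.1]⟩
  left_inv c := by
    rcases c with ⟨c, hc⟩
    dsimp only
    split_ifs with h
    · rfl
    · rfl
  right_inv s := by
    rcases s with ⟨c, hc⟩ | ⟨c, hc⟩
    · dsimp only
      rw [dif_pos hc.1]
    · dsimp only
      rw [dif_neg (by have := hc.1; omega : ¬ c.length ≤ k)]

theorem card_le_split (n q : ℕ) : ∀ k,
    Nat.card {c : List ℕ // c.length ≤ k ∧ Dn n c.length + wsum c = q} =
      ∑ j ∈ Finset.range (k + 1),
        Nat.card {c : List ℕ // c.length = j ∧ Dn n j + wsum c = q} := by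
  intro k
  induction k with
  | zero =>
    rw [Finset.sum_range_one]
    apply Nat.card_congr
    apply Equiv.subtypeEquivRight
    intro c
    constructor
    · rintro ⟨h1, h2⟩
      have h3 : c.length = 0 := by omega
      rw [h3] at h2
      exact ⟨h3, h2⟩
    · rintro ⟨h1, h2⟩
      exact ⟨le_of_eq h1, by rwa [h1]⟩
  | succ k ih =>
    rw [Nat.card_congr (cutEquiv n q k), Nat.card_sum, ih]
    conv_rhs => rw [Finset.sum_range_succ]

theorem card_fiber (n j q : ℕ) :
    Nat.card {c : List ℕ // c.length = j ∧ Dn n j + wsum c = q} =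
      if Dn n j ≤ q then V j (q - Dn n j) else 0 := by
  split_ifs with h
  · rw [V, ← Nat.card_congr (listFnEquiv j (q - Dn n j))]
    apply Nat.card_congr
    apply Equiv.subtypeEquivRight
    intro c
    constructor <;> rintro ⟨h1, h2⟩ <;> exact ⟨h1, by omega⟩
  · haveI : IsEmpty {c : List ℕ // c.length = j ∧ Dn n j + wsum c = q} :=
      ⟨fun c => by have := c.prop.2; omega⟩
    exact Nat.card_of_isEmpty

/-! ### The master bijection -/

def cuEquiv (n k q : ℕ) (hn : 1 ≤ n) :
    {c : List ℕ // c.length ≤ k ∧ Dn n c.length + wsum c = q} ≃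
      {l : List ℕ // l.length ≤ k ∧ IsCU n l ∧ dimCU l = q} where
  toFun c := ⟨build n c.val, by rw [build_length]; exact c.prop.1,
    build_isCU n hn c.val, by rw [build_dim n hn]; exact c.prop.2⟩
  invFun l := ⟨slk n l.val, by
    have hb : build n (slk n l.val) = l.val := build_slk n l.val l.prop.2.1
    have hlen : (slk n l.val).length = l.val.length := by
      conv_rhs => rw [← hb]
      rw [build_length]
    refine ⟨by rw [hlen]; exact l.prop.1, ?_⟩
    have hd := build_dim n hn (slk n l.val)
    rw [hb, l.prop.2.2] at hd
    exact hd.symm⟩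
  left_inv c := Subtype.ext (slk_build n c.val)
  right_inv l := Subtype.ext (build_slk n l.val l.prop.2.1)

theorem cuCount_eq (n k q : ℕ) (hn : 1 ≤ n) :
    cuCount k n q = ∑ j ∈ Finset.range (k + 1),
      (if Dn n j ≤ q then V j (q - Dn n j) else 0) := by
  rw [cuCount, ← Nat.card_congr (cuEquiv n k q hn), card_le_split]
  exact Finset.sum_congr rfl fun j _ => card_fiber n j q

/-! ### Closed form for `Dn` -/

theorem Dn_eq (n : ℕ) (hn : 1 ≤ n) : ∀ j, Dn n j = (n + 1) * (2 ^ j - 1) - 2 * j := by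
  intro j
  induction j with
  | zero => simp [Dn]
  | succ j ih =>
    have hp : 1 ≤ 2 ^ j := Nat.one_le_two_pow
    have hp2 : (1 : ℕ) ≤ 2 ^ (j + 1) := Nat.one_le_two_pow
    have hj : j < 2 ^ j := Nat.lt_two_pow_self
    have h1 : 2 ≤ 2 ^ j * (n + 1) := by
      calc (2 : ℕ) = 1 * 2 := by ring
      _ ≤ 2 ^ j * (n + 1) := Nat.mul_le_mul hp (by omega)
    have h2 : 2 * j ≤ (n + 1) * (2 ^ j - 1) := by
      calc 2 * j ≤ 2 * (2 ^ j - 1) := by omega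
      _ ≤ (n + 1) * (2 ^ j - 1) := Nat.mul_le_mul_right _ (by omega)
    have h3 : 2 * (j + 1) ≤ (n + 1) * (2 ^ (j + 1) - 1) := by
      have hq : (2 : ℕ) ^ (j + 1) = 2 * 2 ^ j := by ring
      calc 2 * (j + 1) ≤ 2 * (2 ^ (j + 1) - 1) := by omega
      _ ≤ (n + 1) * (2 ^ (j + 1) - 1) := Nat.mul_le_mul_right _ (by omega)
    show (2 ^ j * (n + 1) - 2) + Dn n j = _
    rw [ih]
    zify [h1, h2, h3, hp, hp2]
    ring

/-! ### Power series -/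

noncomputable def G (j : ℕ) : PowerSeries ℚ := PowerSeries.mk fun q => (V j q : ℚ)

theorem G_mul_one_sub (j : ℕ) :
    G (j + 1) * (1 - (PowerSeries.X : PowerSeries ℚ) ^ (2 ^ (j + 1) - 1)) = G j := by
  ext q
  rw [mul_sub, mul_one, map_sub, PowerSeries.coeff_mul_X_pow']
  simp only [G, PowerSeries.coeff_mk]
  have h := V_succ j q
  split_ifs with hq
  · rw [h, if_pos hq]
    push_cast
    ring
  · rw [h, if_neg hq]
    push_cast
    ring

theorem G_prod (j : ℕ) :
    G j * ∏ i ∈ Finset.Icc 1 j, (1 - (PowerSeries.X : PowerSeries ℚ) ^ (2 ^ i - 1)) = 1 := by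
  induction j with
  | zero =>
    rw [show Finset.Icc 1 0 = (∅ : Finset ℕ) from Finset.Icc_eq_empty (by omega),
      Finset.prod_empty, mul_one]
    ext q
    rw [PowerSeries.coeff_one]
    simp only [G, PowerSeries.coeff_mk, V_zero]
    split_ifs <;> simp
  | succ j ih =>
    rw [show Finset.Icc 1 (j + 1) = insert (j + 1) (Finset.Icc 1 j) from
        (Finset.insert_Icc_right_eq_Icc_add_one (by omega)).symm,
      Finset.prod_insert (by simp), ← mul_assoc, G_mul_one_sub, ih]

theorem constCoeff_prod (j : ℕ) :
    PowerSeries.constantCoeff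
      (∏ i ∈ Finset.Icc 1 j, (1 - (PowerSeries.X : PowerSeries ℚ) ^ (2 ^ i - 1))) = 1 := by
  rw [map_prod]
  apply Finset.prod_eq_one
  intro i hi
  have hi1 : 1 ≤ i := (Finset.mem_Icc.mp hi).1
  rw [map_sub, map_one, map_pow, PowerSeries.constantCoeff_X, zero_pow, sub_zero]
  have : (2 : ℕ) ≤ 2 ^ i := by
    calc (2 : ℕ) = 2 ^ 1 := by ring
    _ ≤ 2 ^ i := Nat.pow_le_pow_right (by omega) hi1
  omega

theorem prod_inv_eq (j : ℕ) :
    (∏ i ∈ Finset.Icc 1 j, (1 - (PowerSeries.X : PowerSeries ℚ) ^ (2 ^ i - 1)))⁻¹ = G j := by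
  rw [PowerSeries.inv_eq_iff_mul_eq_one (by rw [constCoeff_prod]; norm_num)]
  exact G_prod j

/-- The closed form
`A(k,n;t) = 1 + Σ_{j=1}^{k} t^{(n+1)(2^j−1)−2j} / ∏_{i=1}^{j} (1 − t^{2^i−1})`. -/
theorem A_closed_form (n k : ℕ) (hn : 1 ≤ n) :
    (PowerSeries.mk fun q => (cuCount k n q : ℚ)) =
      1 + ∑ j ∈ Finset.Icc 1 k,
        (PowerSeries.X : PowerSeries ℚ) ^ ((n + 1) * (2 ^ j - 1) - 2 * j) *
          (∏ i ∈ Finset.Icc 1 j, (1 - (PowerSeries.X : PowerSeries ℚ) ^ (2 ^ i - 1)))⁻¹ := by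
  apply PowerSeries.ext
  intro q
  rw [PowerSeries.coeff_mk, map_add, map_sum, PowerSeries.coeff_one]
  have hterm : ∀ j ∈ Finset.Icc 1 k,
      (PowerSeries.coeff q)
          ((PowerSeries.X : PowerSeries ℚ) ^ ((n + 1) * (2 ^ j - 1) - 2 * j) *
            (∏ i ∈ Finset.Icc 1 j, (1 - (PowerSeries.X : PowerSeries ℚ) ^ (2 ^ i - 1)))⁻¹) =
        if Dn n j ≤ q then (V j (q - Dn n j) : ℚ) else 0 := by
    intro j hj
    rw [prod_inv_eq j, PowerSeries.coeff_X_pow_mul', ← Dn_eq n hn j]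
    split_ifs with h
    · rw [G, PowerSeries.coeff_mk]
    · rfl
  rw [Finset.sum_congr rfl hterm, cuCount_eq n k q hn, Nat.cast_sum]
  have hsplit : Finset.range (k + 1) = insert 0 (Finset.Icc 1 k) := by
    ext a
    simp only [Finset.mem_range, Finset.mem_insert, Finset.mem_Icc]
    omega
  rw [hsplit, Finset.sum_insert (by simp)]
  congr 1
  · have h0 : Dn n 0 = 0 := rfl
    rw [h0, if_pos (Nat.zero_le q), Nat.sub_zero, V_zero]
    split_ifs <;> simp
  · apply Finset.sum_congr rfl
    intro j hj
    rw [apply_ite (Nat.cast : ℕ → ℚ), Nat.cast_zero]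
end

section
/- Let α ∈ (0,1) and define F(q) = √(log(1/α)/(2π)) · ∫_{−∞}^{∞} exp(½ log(α)·x² + q·α^{xi − ½}) dx (where i is the imaginary unit and the integral is real-valued). Then F satisfies the functional-differential equation F′(q) = F(αq) for all real q. -/
open MeasureTheory

/-- Mahler's integrand: `exp(½ log(α)·x² + q·α^{xi − ½})`, where
`α^{xi − ½} = exp((xi − ½)·log α)`. -/
noncomputable def mahlerIntegrand (α q x : ℝ) : ℂ :=
  Complex.exp ((1 / 2 : ℂ) * (Real.log α : ℂ) * (x : ℂ) ^ 2 +
    (q : ℂ) * Complex.exp (((x : ℂ) * Complex.I - 1 / 2) * (Real.log α : ℂ)))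

/-- Mahler's function `F(q) = √(log(1/α)/(2π)) · ∫_{−∞}^{∞} exp(½ log(α)x² + q α^{xi−½}) dx`. -/
noncomputable def mahlerF (α q : ℝ) : ℝ :=
  Real.sqrt (Real.log (1 / α) / (2 * Real.pi)) * (∫ x : ℝ, mahlerIntegrand α q x).re

/-! ### Auxiliary material -/

/-- The coefficient `α^{k(k−1)/2}` written via the exponential. -/
noncomputable def mahlerCoef (α : ℝ) (k : ℕ) : ℝ :=
  Real.exp ((k * (k - 1) : ℕ) / 2 * Real.log α)

/-- The entire function `∑ α^{k(k−1)/2} q^k / k!`. -/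
noncomputable def mahlerG (α q : ℝ) : ℝ :=
  ∑' k : ℕ, mahlerCoef α k * q ^ k / (k.factorial : ℝ)

/-- A single term appearing in the series expansion of Mahler's integrand. -/
noncomputable def mahlerTerm (L q : ℝ) (k : ℕ) (x : ℝ) : ℂ :=
  (q : ℂ) ^ k * Complex.exp (((L / 2 : ℝ) : ℂ) * (x : ℂ) ^ 2 +
    (((k : ℝ) * L : ℝ) : ℂ) * Complex.I * (x : ℂ) + ((-((k : ℝ) * L) / 2 : ℝ) : ℂ)) /
    (k.factorial : ℂ)

lemma mahlerCoef_pos (α : ℝ) (k : ℕ) : 0 < mahlerCoef α k := Real.exp_pos _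

lemma mahlerCoef_le_one {α : ℝ} (hα : α ∈ Set.Ioo (0 : ℝ) 1) (k : ℕ) :
    mahlerCoef α k ≤ 1 := by
  have hL : Real.log α < 0 := Real.log_neg hα.1 hα.2
  have : ((k * (k - 1) : ℕ) : ℝ) / 2 * Real.log α ≤ 0 := by
    apply mul_nonpos_of_nonneg_of_nonpos _ hL.le
    positivity
  exact Real.exp_le_one_iff.mpr this

lemma mahlerCoef_succ {α : ℝ} (hα : 0 < α) (k : ℕ) :
    mahlerCoef α (k + 1) = mahlerCoef α k * α ^ k := by
  have hk : (k + 1) * ((k + 1) - 1) = k * (k - 1) + 2 * k := by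
    cases k with
    | zero => rfl
    | succ n => simp [Nat.succ_sub_one]; ring
  have hexp : α = Real.exp (Real.log α) := (Real.exp_log hα).symm
  rw [mahlerCoef, mahlerCoef, hk]
  rw [show (((k * (k - 1) + 2 * k : ℕ) : ℝ)) / 2 * Real.log α
      = ((k * (k - 1) : ℕ) : ℝ) / 2 * Real.log α + k * Real.log α by push_cast; ring]
  rw [Real.exp_add]
  congr 1
  conv_rhs => rw [hexp]
  exact Real.exp_nat_mul _ k

lemma summable_mahlerG {α : ℝ} (hα : α ∈ Set.Ioo (0 : ℝ) 1) (q : ℝ) :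
    Summable fun k : ℕ => mahlerCoef α k * q ^ k / (k.factorial : ℝ) := by
  refine Summable.of_norm_bounded (Real.summable_pow_div_factorial |q|) fun k => ?_
  have h1 := mahlerCoef_le_one hα k
  have h0 := (mahlerCoef_pos α k).le
  rw [Real.norm_eq_abs, abs_div, abs_mul, abs_pow, Nat.abs_cast, abs_of_nonneg h0]
  gcongr
  exact mul_le_of_le_one_left (pow_nonneg (abs_nonneg q) k) h1

lemma mahler_integral_eq {α : ℝ} (hα : α ∈ Set.Ioo (0 : ℝ) 1) (q : ℝ) :
    ∫ x : ℝ, mahlerIntegrand α q x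
      = ((Real.sqrt (2 * Real.pi / (-Real.log α)) * mahlerG α q : ℝ) : ℂ) := by
  set L := Real.log α with hLdef
  have hL : L < 0 := Real.log_neg hα.1 hα.2
  have hLne : L ≠ 0 := hL.ne
  have hb : (((L / 2 : ℝ) : ℂ)).re < 0 := by
    rw [Complex.ofReal_re]; linarith
  -- pointwise expansion
  have hpt : ∀ x : ℝ, mahlerIntegrand α q x = ∑' k : ℕ, mahlerTerm L q k x := by
    intro x
    have hexpand : ∀ z : ℂ, Complex.exp z = ∑' n : ℕ, z ^ n / (n.factorial : ℂ) := fun z => by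
      rw [Complex.exp_eq_exp_ℂ, NormedSpace.exp_eq_tsum_div]
    rw [mahlerIntegrand, Complex.exp_add,
      hexpand ((q : ℂ) * Complex.exp (((x : ℂ) * Complex.I - 1 / 2) * (Real.log α : ℂ))),
      ← tsum_mul_left]
    refine tsum_congr fun k => ?_
    rw [mahlerTerm, mul_pow, ← Complex.exp_nat_mul]
    rw [show (((L / 2 : ℝ) : ℂ) * (x : ℂ) ^ 2 + (((k : ℝ) * L : ℝ) : ℂ) * Complex.I * (x : ℂ)
          + ((-((k : ℝ) * L) / 2 : ℝ) : ℂ))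
        = (1 / 2 : ℂ) * (L : ℂ) * (x : ℂ) ^ 2 +
          (k : ℂ) * (((x : ℂ) * Complex.I - 1 / 2) * (L : ℂ)) by push_cast; ring]
    rw [Complex.exp_add]
    ring
  -- integrability and norms
  have hInt : ∀ k : ℕ, Integrable (fun x : ℝ => mahlerTerm L q k x) := by
    intro k
    have := (integrable_cexp_quadratic' hb ((((k : ℝ) * L : ℝ) : ℂ) * Complex.I)
      ((-((k : ℝ) * L) / 2 : ℝ) : ℂ)).const_mul ((q : ℂ) ^ k)
    exact this.div_const _
  have hnorm : ∀ k : ℕ, ∀ x : ℝ, ‖mahlerTerm L q k x‖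
      = |q| ^ k / (k.factorial : ℝ) * (Real.exp (-((k : ℝ) * L) / 2) *
        Real.exp (L / 2 * x ^ 2)) := by
    intro k x
    rw [mahlerTerm, norm_div, norm_mul, norm_pow, Complex.norm_exp]
    have hre : (((L / 2 : ℝ) : ℂ) * (x : ℂ) ^ 2 + (((k : ℝ) * L : ℝ) : ℂ) * Complex.I * (x : ℂ)
        + ((-((k : ℝ) * L) / 2 : ℝ) : ℂ)).re = L / 2 * x ^ 2 + -((k : ℝ) * L) / 2 := by
      rw [show (((L / 2 : ℝ) : ℂ) * (x : ℂ) ^ 2 + (((k : ℝ) * L : ℝ) : ℂ) * Complex.I * (x : ℂ)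
          + ((-((k : ℝ) * L) / 2 : ℝ) : ℂ))
          = ((L / 2 * x ^ 2 : ℝ) : ℂ) + (((k : ℝ) * L * x : ℝ) : ℂ) * Complex.I
            + ((-((k : ℝ) * L) / 2 : ℝ) : ℂ) by push_cast; ring]
      simp [← Complex.ofReal_pow]
    rw [hre, Real.exp_add]
    simp [Complex.norm_real, Complex.norm_natCast, abs_of_nonneg (Nat.cast_nonneg _ : (0:ℝ) ≤ _)]
    ring
  have hGauss : (∫ x : ℝ, Real.exp (L / 2 * x ^ 2)) = Real.sqrt (Real.pi / (-(L / 2))) := by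
    rw [← integral_gaussian]
    congr 1; ext x; ring_nf
  have hIntNorm : ∀ k : ℕ, (∫ x : ℝ, ‖mahlerTerm L q k x‖)
      = |q| ^ k / (k.factorial : ℝ) * Real.exp (-((k : ℝ) * L) / 2) *
        Real.sqrt (Real.pi / (-(L / 2))) := by
    intro k
    simp_rw [hnorm k]
    rw [integral_const_mul, integral_const_mul, hGauss]
    ring
  have hSum : Summable fun k : ℕ => ∫ x : ℝ, ‖mahlerTerm L q k x‖ := by
    rw [show (fun k : ℕ => ∫ x : ℝ, ‖mahlerTerm L q k x‖)
        = fun k : ℕ => (|q| * Real.exp (-L / 2)) ^ k / (k.factorial : ℝ) *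
          Real.sqrt (Real.pi / (-(L / 2))) from funext fun k => by
        rw [hIntNorm k, mul_pow, show -((k : ℝ) * L) / 2 = (k : ℝ) * (-L / 2) by ring,
          Real.exp_nat_mul]
        ring]
    exact (Real.summable_pow_div_factorial _).mul_right _
  -- the computation
  have hterm : ∀ k : ℕ, (∫ x : ℝ, mahlerTerm L q k x)
      = ((Real.sqrt (2 * Real.pi / (-L)) * (mahlerCoef α k * q ^ k / (k.factorial : ℝ)) : ℝ) : ℂ) := by
    intro k
    have hnatcast : ((k * (k - 1) : ℕ) : ℝ) = (k : ℝ) ^ 2 - k := by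
      cases k with
      | zero => simp
      | succ n => push_cast [Nat.succ_sub_one]; ring
    rw [show (fun x : ℝ => mahlerTerm L q k x)
        = fun x : ℝ => (q : ℂ) ^ k * Complex.exp (((L / 2 : ℝ) : ℂ) * (x : ℂ) ^ 2 +
          (((k : ℝ) * L : ℝ) : ℂ) * Complex.I * (x : ℂ) + ((-((k : ℝ) * L) / 2 : ℝ) : ℂ)) /
          (k.factorial : ℂ) from rfl]
    simp_rw [mul_div_assoc]
    rw [integral_const_mul, integral_div, integral_cexp_quadratic hb]
    have h1 : ((Real.pi : ℂ) / -((L / 2 : ℝ) : ℂ)) = ((2 * Real.pi / (-L) : ℝ) : ℂ) := by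
      push_cast
      field_simp
    have h2 : (((2 * Real.pi / (-L) : ℝ) : ℂ)) ^ (1 / 2 : ℂ)
        = ((Real.sqrt (2 * Real.pi / (-L)) : ℝ) : ℂ) := by
      have hpos : (0 : ℝ) ≤ 2 * Real.pi / (-L) :=
        le_of_lt (div_pos (by positivity) (by linarith))
      rw [Real.sqrt_eq_rpow, Complex.ofReal_cpow hpos]
      norm_num
    have h3 : Complex.exp (((-((k : ℝ) * L) / 2 : ℝ) : ℂ) -
        ((((k : ℝ) * L : ℝ) : ℂ) * Complex.I) ^ 2 / (4 * ((L / 2 : ℝ) : ℂ)))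
        = ((mahlerCoef α k : ℝ) : ℂ) := by
      rw [mahlerCoef, ← hLdef, Complex.ofReal_exp]
      congr 1
      have hLC : (L : ℂ) ≠ 0 := by exact_mod_cast hLne
      rw [show (((k * (k - 1) : ℕ) : ℝ) / 2 * L : ℝ) = (((k : ℝ) ^ 2 - k) / 2 * L : ℝ) by
        rw [hnatcast]]
      push_cast
      rw [mul_pow, Complex.I_sq]
      field_simp [hLC]
      ring
    rw [h1, h2, h3]
    push_cast
    ring
  calc ∫ x : ℝ, mahlerIntegrand α q x
      = ∫ x : ℝ, ∑' k : ℕ, mahlerTerm L q k x := by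
        exact integral_congr_ae (Filter.Eventually.of_forall hpt)
    _ = ∑' k : ℕ, ∫ x : ℝ, mahlerTerm L q k x :=
        (integral_tsum_of_summable_integral_norm hInt hSum).symm
    _ = ∑' k : ℕ, ((Real.sqrt (2 * Real.pi / (-L)) *
          (mahlerCoef α k * q ^ k / (k.factorial : ℝ)) : ℝ) : ℂ) := tsum_congr hterm
    _ = ((∑' k : ℕ, Real.sqrt (2 * Real.pi / (-L)) *
          (mahlerCoef α k * q ^ k / (k.factorial : ℝ)) : ℝ) : ℂ) :=
        (Complex.ofReal_tsum _).symm
    _ = ((Real.sqrt (2 * Real.pi / (-L)) * mahlerG α q : ℝ) : ℂ) := by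
        rw [tsum_mul_left, mahlerG]

lemma mahlerF_eq_mahlerG {α : ℝ} (hα : α ∈ Set.Ioo (0 : ℝ) 1) (q : ℝ) :
    mahlerF α q = mahlerG α q := by
  have hL : Real.log α < 0 := Real.log_neg hα.1 hα.2
  rw [mahlerF, mahler_integral_eq hα, Complex.ofReal_re]
  rw [one_div, Real.log_inv]
  rw [← mul_assoc, ← Real.sqrt_mul
    (le_of_lt (div_pos (by linarith) (by positivity)) : (0:ℝ) ≤ -Real.log α / (2 * Real.pi))]
  rw [show -Real.log α / (2 * Real.pi) * (2 * Real.pi / -Real.log α) = 1 from by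
    rw [div_mul_div_comm, mul_comm (2 * Real.pi) (-Real.log α)]
    exact div_self (mul_ne_zero (by intro h; nlinarith) (by positivity))]
  rw [Real.sqrt_one, one_mul]

lemma mahlerG_hasDerivAt {α : ℝ} (hα : α ∈ Set.Ioo (0 : ℝ) 1) (q : ℝ) :
    HasDerivAt (mahlerG α) (mahlerG α (α * q)) q := by
  set R : ℝ := |q| + 1 with hR
  have hR0 : 0 < R := by rw [hR]; linarith [abs_nonneg q]
  have hqR : |q| < R := by rw [hR]; linarith
  set u : ℕ → ℝ := fun k => (k : ℝ) * R ^ (k - 1) / (k.factorial : ℝ) with hu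
  have hsumu : Summable u := by
    rw [← summable_nat_add_iff 1]
    refine (Real.summable_pow_div_factorial R).congr fun n => ?_
    simp only [hu, Nat.add_sub_cancel, Nat.factorial_succ, Nat.cast_mul, Nat.cast_add,
      Nat.cast_one]
    rw [eq_div_iff (by positivity)]
    field_simp
  have hbound : ∀ (k : ℕ) (y : ℝ), |y| ≤ R →
      ‖mahlerCoef α k / (k.factorial : ℝ) * ((k : ℝ) * y ^ (k - 1))‖ ≤ u k := by
    intro k y hyR
    have h0 := (mahlerCoef_pos α k).le
    have h1 := mahlerCoef_le_one hα k
    have hpow : |y| ^ (k - 1) ≤ R ^ (k - 1) := pow_le_pow_left₀ (abs_nonneg y) hyR _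
    have hnrm : ‖mahlerCoef α k / (k.factorial : ℝ) * ((k : ℝ) * y ^ (k - 1))‖
        = mahlerCoef α k * ((k : ℝ) * |y| ^ (k - 1)) / (k.factorial : ℝ) := by
      rw [Real.norm_eq_abs, abs_mul, abs_div, abs_of_nonneg h0, Nat.abs_cast, abs_mul,
        Nat.abs_cast, abs_pow]
      ring
    rw [hnrm]
    simp only [hu]
    have hnum : mahlerCoef α k * ((k : ℝ) * |y| ^ (k - 1)) ≤ (k : ℝ) * R ^ (k - 1) := by
      calc mahlerCoef α k * ((k : ℝ) * |y| ^ (k - 1)) ≤ 1 * ((k : ℝ) * R ^ (k - 1)) := by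
            apply mul_le_mul h1 _ (by positivity) one_pos.le
            exact mul_le_mul_of_nonneg_left hpow (Nat.cast_nonneg k)
        _ = (k : ℝ) * R ^ (k - 1) := one_mul _
    exact div_le_div₀ (by positivity) hnum (by positivity) le_rfl
  have key : HasDerivAt (fun z => ∑' k : ℕ, mahlerCoef α k / (k.factorial : ℝ) * z ^ k)
      (∑' k : ℕ, mahlerCoef α k / (k.factorial : ℝ) * ((k : ℝ) * q ^ (k - 1))) q := by
    refine hasDerivAt_tsum_of_isPreconnected hsumu (Metric.isOpen_ball)
      (convex_ball (0:ℝ) R).isPreconnected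
      (fun k y _ => (hasDerivAt_pow k y).const_mul _) (fun k y hy => ?_)
      (by simpa [Real.dist_eq] using hqR) ?_ (by simpa [Real.dist_eq] using hqR)
    · refine hbound k y ?_
      rw [Metric.mem_ball, Real.dist_eq, sub_zero] at hy
      exact hy.le
    · refine ((summable_mahlerG hα q).congr fun k => ?_)
      ring
  have hfun : (fun z => ∑' k : ℕ, mahlerCoef α k / (k.factorial : ℝ) * z ^ k) = mahlerG α := by
    funext z
    rw [mahlerG]
    exact tsum_congr fun k => by ring
  have hderivsum : Summable fun k : ℕ =>
      mahlerCoef α k / (k.factorial : ℝ) * ((k : ℝ) * q ^ (k - 1)) :=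
    Summable.of_norm_bounded hsumu fun k => hbound k q hqR.le
  have hval : (∑' k : ℕ, mahlerCoef α k / (k.factorial : ℝ) * ((k : ℝ) * q ^ (k - 1)))
      = mahlerG α (α * q) := by
    rw [Summable.tsum_eq_zero_add hderivsum]
    simp only [Nat.cast_zero, zero_mul, mul_zero, zero_add]
    rw [mahlerG]
    refine tsum_congr fun n => ?_
    rw [mahlerCoef_succ hα.1 n]
    rw [Nat.factorial_succ, Nat.add_sub_cancel]
    push_cast
    have hfac : (n.factorial : ℝ) ≠ 0 := by positivity
    field_simp
    ring
  have h := key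
  rw [hval] at h
  rw [hfun] at h
  exact h

/-- For `α ∈ (0,1)`, Mahler's integral is real-valued and `F` satisfies `F′(q) = F(αq)`. -/
theorem mahlerF_deriv (α : ℝ) (hα : α ∈ Set.Ioo (0 : ℝ) 1) :
    (∀ q : ℝ, (∫ x : ℝ, mahlerIntegrand α q x).im = 0) ∧
    (∀ q : ℝ, HasDerivAt (mahlerF α) (mahlerF α (α * q)) q) := by
  constructor
  · intro q
    rw [mahler_integral_eq hα q, Complex.ofReal_im]
  · intro q
    have hfun : mahlerF α = mahlerG α := funext fun r => mahlerF_eq_mahlerG hα r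
    rw [hfun]
    exact mahlerG_hasDerivAt hα q
end

section
/- For n ≥ 1 and k ≥ 0, the number of completely unadmissible sequences of excess n and length at most k in dimension q is non-decreasing in k and in q is dominated by: coefficient of t^q in Σ_{j=0}^k t^{(n+1)(2^j−1)−2j}·∏_{i=1}^j (1−t^{2^i−1})^{−1}; in particular for n ≥ 3 and q ≥ 1 this coefficient is at most Σ_{j=1}^k q^{j−1}/((j−1)!·2^{j(j−1)/2}). -/
/-- The closed-form bound series
`Σ_{j=0}^k t^{(n+1)(2^j−1)−2j}·∏_{i=1}^j (1−t^{2^i−1})^{−1}`. -/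
noncomputable def Abound (k n : ℕ) : PowerSeries ℝ :=
  ∑ j ∈ Finset.range (k + 1),
    (PowerSeries.X : PowerSeries ℝ) ^ ((n + 1) * (2 ^ j - 1) - 2 * j) *
      (∏ i ∈ Finset.Icc 1 j, (1 - (PowerSeries.X : PowerSeries ℝ) ^ (2 ^ i - 1)))⁻¹



namespace CUaux
open Finset

lemma isCU_single {n i : ℕ} : IsCU n [i] ↔ n ≤ i ∧ 0 < i := by
  constructor
  · rintro ⟨h1, h2, _⟩
    exact ⟨h2 (by simp), h1 i (by simp)⟩
  · rintro ⟨h1, h2⟩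
    refine ⟨by simpa using h2, fun _ => by simpa using h1, fun m hm => by simp at hm⟩

lemma isCU_cons {n i j : ℕ} {t : List ℕ} :
    IsCU n (i :: j :: t) ↔ 2 * j + 1 ≤ i ∧ IsCU n (j :: t) := by
  constructor
  · rintro ⟨h1, h2, h3⟩
    refine ⟨by simpa using h3 0 (by simp), ?_, fun h => ?_, fun m hm => ?_⟩
    · intro x hx; exact h1 x (List.mem_cons_of_mem _ hx)
    · have := h2 (by simp)
      rwa [List.getLast_cons (by simp)] at this
    · have := h3 (m+1) (by simpa using hm)
      simpa using this
  · rintro ⟨h0, h1, h2, h3⟩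
    refine ⟨?_, fun _ => ?_, fun m hm => ?_⟩
    · intro x hx
      rcases List.mem_cons.mp hx with rfl | hx
      · omega
      · exact h1 x hx
    · rw [List.getLast_cons (by simp)]
      exact h2 (by simp)
    · match m with
      | 0 => simpa using h0
      | Nat.succ m' =>
        have := h3 m' (by simpa using hm)
        simpa using this

def wsum (s : List ℕ) : ℕ := ∑ i ∈ Finset.range s.length, (2 ^ (i+1) - 1) * s.getD i 0
def wsum2 (s : List ℕ) : ℕ := ∑ i ∈ Finset.range s.length, 2 ^ i * s.getD i 0

lemma getD_sum (u : List ℕ) : ∑ i ∈ Finset.range u.length, u.getD i 0 = u.sum := by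
  induction u with
  | nil => simp
  | cons x u ih =>
    rw [List.length_cons, Finset.sum_range_succ']
    simp only [List.getD_cons_succ, List.getD_cons_zero, List.sum_cons, ih]
    omega

lemma wsum_cons (x : ℕ) (u : List ℕ) : wsum (x :: u) = x + 2 * wsum u + u.sum := by
  rw [wsum, List.length_cons, Finset.sum_range_succ']
  have : ∀ i ∈ Finset.range u.length,
      (2 ^ (i+1+1) - 1) * (x :: u).getD (i+1) 0
      = 2 * ((2 ^ (i+1) - 1) * u.getD i 0) + u.getD i 0 := by
    intro i _
    have h1 : 1 ≤ 2 ^ (i+1) := Nat.one_le_two_pow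
    have h2 : 2 ^ (i+1+1) = 2 * 2 ^ (i+1) := by ring
    simp only [List.getD_cons_succ]
    -- (2^(i+2)-1) * u_i = 2*(2^(i+1)-1)*u_i + u_i
    have : 2 ^ (i+1+1) - 1 = 2 * (2 ^ (i+1) - 1) + 1 := by omega
    rw [this]; ring
  rw [Finset.sum_congr rfl this, Finset.sum_add_distrib, ← Finset.mul_sum, getD_sum]
  simp [wsum]; ring

lemma wsum2_cons (x : ℕ) (u : List ℕ) : wsum2 (x :: u) = x + 2 * wsum2 u := by
  rw [wsum2, List.length_cons, Finset.sum_range_succ']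
  have : ∀ i ∈ Finset.range u.length,
      2 ^ (i+1) * (x :: u).getD (i+1) 0 = 2 * (2 ^ i * u.getD i 0) := by
    intro i _; simp only [List.getD_cons_succ]; ring
  rw [Finset.sum_congr rfl this, ← Finset.mul_sum]
  simp [wsum2]; ring

lemma wsum2_rel (u : List ℕ) : 2 * wsum2 u = wsum u + u.sum := by
  induction u with
  | nil => simp [wsum, wsum2]
  | cons x u ih =>
    rw [wsum_cons, wsum2_cons, List.sum_cons]; omega

def slack (n : ℕ) : List ℕ → List ℕ
  | [] => []
  | [i] => [i - n]
  | i :: j :: t => (i - (2 * j + 1)) :: slack n (j :: t)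

lemma slack_length (n : ℕ) : ∀ l : List ℕ, (slack n l).length = l.length
  | [] => rfl
  | [_] => rfl
  | i :: j :: t => by
    show (slack n (j :: t)).length + 1 = _
    rw [slack_length n (j :: t)]; rfl

lemma dimCU_cons (i : ℕ) (t : List ℕ) : dimCU (i :: t) = (i - 1) + dimCU t := by
  simp [dimCU]

lemma wsum_single (x : ℕ) : wsum [x] = x := by simp [wsum]
lemma wsum2_single (x : ℕ) : wsum2 [x] = x := by simp [wsum2]

set_option maxHeartbeats 1000000 in
lemma cu_inv {n : ℕ} (hn : 1 ≤ n) : ∀ l : List ℕ, IsCU n l → l ≠ [] →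
    ((l.head! : ℤ) + 1 = 2 ^ (l.length - 1) * (n + 1) + wsum2 (slack n l)) ∧
    ((dimCU l : ℤ) + 2 * l.length = (n + 1) * (2 ^ l.length - 1) + wsum (slack n l))
  | [], _, h => absurd rfl h
  | [i], hcu, _ => by
    obtain ⟨hni, hi⟩ := isCU_single.mp hcu
    constructor
    · show (i : ℤ) + 1 = 2 ^ 0 * (n+1) + (wsum2 [i - n] : ℤ)
      rw [wsum2_single]
      have : ((i - n : ℕ) : ℤ) = i - n := by omega
      rw [this]; push_cast; ring
    · show ((dimCU [i] : ℕ) : ℤ) + 2 * 1 = (n + 1) * (2 ^ 1 - 1) + (wsum [i - n] : ℤ)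
      rw [wsum_single]
      have h1 : dimCU [i] = i - 1 := by simp [dimCU]
      have : ((i - n : ℕ) : ℤ) = i - n := by omega
      rw [h1, this]
      have : ((i - 1 : ℕ) : ℤ) = i - 1 := by omega
      rw [this]; push_cast; ring
  | i :: j :: t, hcu, _ => by
    obtain ⟨hij, hcu'⟩ := isCU_cons.mp hcu
    obtain ⟨ihA, ihB⟩ := cu_inv hn (j :: t) hcu' (by simp)
    have hj : 0 < j := hcu'.1 j (by simp)
    set u := j :: t with hu
    have hlen : u.length = t.length + 1 := rfl
    have hslack : slack n (i :: u) = (i - (2*j+1)) :: slack n u := rfl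
    have hs : ((i - (2*j+1) : ℕ) : ℤ) = (i : ℤ) - (2*j+1) := by omega
    have hhead : (u.head! : ℕ) = j := rfl
    rw [hhead] at ihA
    have hp1 : (2:ℤ) ^ u.length = 2 * 2 ^ (u.length - 1) := by
      conv_lhs => rw [show u.length = (u.length - 1) + 1 by omega]
      ring
    have hp2 : (2:ℤ) ^ (i :: u).length = 2 * 2 ^ u.length := by
      show (2:ℤ) ^ (u.length + 1) = _
      ring
    have hw : (wsum (slack n (i :: u)) : ℤ)
        = ((i - (2*j+1) : ℕ) : ℤ) + 2 * wsum (slack n u) + (slack n u).sum := by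
      rw [hslack, wsum_cons]; push_cast; ring
    have hw2 : (wsum2 (slack n (i :: u)) : ℤ)
        = ((i - (2*j+1) : ℕ) : ℤ) + 2 * wsum2 (slack n u) := by
      rw [hslack, wsum2_cons]; push_cast; ring
    have hrel : 2 * (wsum2 (slack n u) : ℤ) = wsum (slack n u) + (slack n u).sum := by
      exact_mod_cast congrArg (Nat.cast : ℕ → ℤ) (wsum2_rel (slack n u))
    have hdim : (dimCU (i :: u) : ℤ) = ((i:ℤ) - 1) + dimCU u := by
      rw [dimCU_cons]
      have : ((i - 1 : ℕ) : ℤ) = (i : ℤ) - 1 := by omega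
      push_cast [this]; ring
    simp only [List.head!_cons]
    constructor
    · show (i : ℤ) + 1 = 2 ^ ((i :: u).length - 1) * (n+1) + _
      have : ((i :: u).length - 1 : ℕ) = u.length := rfl
      rw [this, hw2, hs, hp1]
      linear_combination 2 * ihA
    · show (dimCU (i :: u) : ℤ) + 2 * (i :: u).length = (n + 1) * (2 ^ (i :: u).length - 1) + _
      rw [hdim, hw, hs, hp2]
      have hc : ((i :: u).length : ℤ) = (u.length : ℤ) + 1 := by push_cast [List.length_cons]; ring
      rw [hc]
      linear_combination ihB + 2 * ihA + hrel - ((n:ℤ)+1) * hp1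

end CUaux

namespace CUaux
open Finset

def aexp (n j : ℕ) : ℕ := (n + 1) * (2 ^ j - 1) - 2 * j

lemma aexp_add (n j : ℕ) (hn : 1 ≤ n) : aexp n j + 2 * j = (n + 1) * (2 ^ j - 1) := by
  have h1 : j < 2 ^ j := (Nat.lt_two_pow_self (n := j))
  have h2 : 2 * j ≤ 2 * (2 ^ j - 1) := by omega
  have h3 : 2 * (2 ^ j - 1) ≤ (n + 1) * (2 ^ j - 1) := Nat.mul_le_mul_right _ (by omega)
  rw [aexp]; omega

lemma wsum_slack_eq {n : ℕ} (hn : 1 ≤ n) {l : List ℕ} (hcu : IsCU n l) :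
    wsum (slack n l) + aexp n l.length = dimCU l ∧ aexp n l.length ≤ dimCU l := by
  rcases eq_or_ne l [] with rfl | hne
  · simp [wsum, slack, aexp, dimCU]
  · obtain ⟨-, hB⟩ := cu_inv hn l hcu hne
    have hax := aexp_add n l.length hn
    have hZ : (wsum (slack n l) : ℤ) + (n + 1) * ((2:ℤ) ^ l.length - 1)
        = (dimCU l : ℤ) + 2 * l.length := by linarith [hB]
    have hcast : ((n + 1) * (2 ^ l.length - 1) : ℕ) = ((n:ℤ) + 1) * ((2:ℤ) ^ l.length - 1) := by
      have : (1:ℕ) ≤ 2 ^ l.length := Nat.one_le_two_pow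
      push_cast [this]; ring
    have hN : wsum (slack n l) + (n + 1) * (2 ^ l.length - 1) = dimCU l + 2 * l.length := by
      have := hZ
      rw [← hcast] at this
      exact_mod_cast this
    omega

lemma slack_inj {n : ℕ} : ∀ l l' : List ℕ, IsCU n l → IsCU n l' →
    l.length = l'.length → slack n l = slack n l' → l = l'
  | [], [], _, _, _, _ => rfl
  | [i], [i'], h, h', _, hs => by
    obtain ⟨h1, -⟩ := isCU_single.mp h
    obtain ⟨h1', -⟩ := isCU_single.mp h'
    have : i - n = i' - n := by simpa [slack] using hs
    have : i = i' := by omega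
    rw [this]
  | i :: j :: t, i' :: j' :: t', h, h', hlen, hs => by
    obtain ⟨hij, hcu⟩ := isCU_cons.mp h
    obtain ⟨hij', hcu'⟩ := isCU_cons.mp h'
    have hs1 : i - (2*j+1) = i' - (2*j'+1) := by
      have := congrArg (List.head! ) hs
      simpa [slack] using this
    have hs2 : slack n (j :: t) = slack n (j' :: t') := by
      have := congrArg (List.tail) hs
      simpa [slack] using this
    have hlen' : (j :: t).length = (j' :: t').length := by simpa using hlen
    have heq := slack_inj (j :: t) (j' :: t') hcu hcu' hlen' hs2
    have hjj : j = j' := by injection heq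
    rw [heq]
    congr 1
    omega
  | [], _ :: _, _, _, hlen, _ => by simp at hlen
  | _ :: _, [], _, _, hlen, _ => by simp at hlen
  | [_], _ :: _ :: _, _, _, hlen, _ => by
    exfalso
    simp only [List.length_cons, List.length_nil] at hlen
    omega
  | _ :: _ :: _, [_], _, _, hlen, _ => by
    exfalso
    simp only [List.length_cons, List.length_nil] at hlen
    omega

/-- the finsupp associated to a CU list -/
noncomputable def Fmap (n : ℕ) (l : List ℕ) : ℕ →₀ ℕ :=
  Finsupp.onFinset (Finset.Icc 1 l.length)
    (fun i => if i ∈ Finset.Icc 1 l.length then (2 ^ i - 1) * ((slack n l).getD (i-1) 0) else 0)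
    (fun a ha => by by_contra h; simp [h] at ha)

lemma Fmap_apply (n : ℕ) (l : List ℕ) (i : ℕ) :
    Fmap n l i = if i ∈ Finset.Icc 1 l.length then (2 ^ i - 1) * ((slack n l).getD (i-1) 0) else 0 :=
  Finsupp.onFinset_apply

lemma Fmap_sum (n : ℕ) (l : List ℕ) :
    ∑ i ∈ Finset.Icc 1 l.length, Fmap n l i = wsum (slack n l) := by
  rw [Finset.sum_congr rfl (fun i hi => by rw [Fmap_apply, if_pos hi])]
  have : Finset.Icc 1 l.length = Finset.Ico 1 (l.length + 1) := by
    ext x; simp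
  rw [this, Finset.sum_Ico_eq_sum_range]
  rw [wsum]
  have hlen : (slack n l).length = l.length := slack_length n l
  rw [hlen]
  have : l.length + 1 - 1 = l.length := by omega
  rw [this]
  apply Finset.sum_congr rfl
  intro i _
  rw [Nat.add_comm 1 i, Nat.add_sub_cancel]

def Tset (j m : ℕ) : Finset (ℕ →₀ ℕ) :=
  (Finset.finsuppAntidiag (Finset.Icc 1 j) m).filter
    (fun f => ∀ i ∈ Finset.Icc 1 j, (2 ^ i - 1) ∣ f i)

lemma Fmap_mem {n : ℕ} (hn : 1 ≤ n) {l : List ℕ} (hcu : IsCU n l) :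
    Fmap n l ∈ Tset l.length (dimCU l - aexp n l.length) := by
  obtain ⟨heq, hle⟩ := wsum_slack_eq hn hcu
  rw [Tset, Finset.mem_filter, Finset.mem_finsuppAntidiag]
  refine ⟨⟨?_, Finsupp.support_onFinset_subset⟩, ?_⟩
  · rw [Fmap_sum]; omega
  · intro i hi
    rw [Fmap_apply, if_pos hi]
    exact Dvd.intro _ rfl

lemma Fmap_inj {n : ℕ} (hn : 1 ≤ n) {l l' : List ℕ} (hcu : IsCU n l) (hcu' : IsCU n l')
    (hlen : l.length = l'.length) (hF : Fmap n l = Fmap n l') : l = l' := by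
  apply slack_inj l l' hcu hcu' hlen
  apply List.ext_getElem (by rw [slack_length, slack_length, hlen])
  intro i h1 h2
  have hi : i < l.length := by rwa [slack_length] at h1
  have happ := DFunLike.congr_fun hF (i + 1)
  simp only [Fmap_apply] at happ
  have hmem : i + 1 ∈ Finset.Icc 1 l.length := by simp; omega
  have hmem' : i + 1 ∈ Finset.Icc 1 l'.length := by simp; omega
  rw [if_pos hmem, if_pos hmem'] at happ
  have hpow : 0 < 2 ^ (i+1) - 1 := by
    have : 2 ≤ 2 ^ (i+1) := by have := Nat.one_le_two_pow (n := i); omega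
    omega
  have heq : (slack n l).getD (i+1-1) 0 = (slack n l').getD (i+1-1) 0 :=
    Nat.eq_of_mul_eq_mul_left hpow happ
  have hidx : i + 1 - 1 = i := by omega
  rw [hidx, List.getD_eq_getElem _ _ h1, List.getD_eq_getElem _ _ h2] at heq
  exact heq

end CUaux

namespace CUaux
open PowerSeries

noncomputable def geom (c : ℕ) : PowerSeries ℝ :=
  PowerSeries.mk (fun m => if c ∣ m then (1:ℝ) else 0)

lemma geom_mul (c : ℕ) (hc : 1 ≤ c) :
    (1 - (PowerSeries.X : PowerSeries ℝ) ^ c) * geom c = 1 := by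
  ext m
  rw [sub_mul, one_mul, map_sub]
  simp only [geom, coeff_X_pow_mul', coeff_mk, PowerSeries.coeff_one]
  by_cases hm0 : m = 0
  · subst hm0
    simp [Nat.dvd_zero, show ¬ c ≤ 0 by omega]
  · by_cases hcm : c ≤ m
    · by_cases hd : c ∣ m
      · have hd2 : c ∣ m - c := Nat.dvd_sub hd dvd_rfl
        simp [hd, hcm, hd2, hm0]
      · have hd2 : ¬ c ∣ m - c := fun h => hd (by
          have := Nat.dvd_add h (dvd_refl c)
          rwa [Nat.sub_add_cancel hcm] at this)
        simp [hd, hcm, hd2, hm0]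
    · have hd : ¬ c ∣ m := fun h => hcm (Nat.le_of_dvd (by omega) h)
      simp [hd, hcm, hm0]

lemma constCoeff_prod (j : ℕ) :
    PowerSeries.constantCoeff
      (∏ i ∈ Finset.Icc 1 j, (1 - (PowerSeries.X : PowerSeries ℝ) ^ (2 ^ i - 1))) = 1 := by
  rw [map_prod]
  apply Finset.prod_eq_one
  intro i hi
  have hi1 : 1 ≤ i := (Finset.mem_Icc.mp hi).1
  have hc : 1 ≤ 2 ^ i - 1 := by
    have : 2 ≤ 2 ^ i := by
      calc 2 = 2 ^ 1 := rfl
      _ ≤ 2 ^ i := Nat.pow_le_pow_right (by norm_num) hi1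
    omega
  rw [map_sub, map_one, map_pow, PowerSeries.constantCoeff_X, zero_pow (by omega), sub_zero]

lemma prod_inv (j : ℕ) :
    (∏ i ∈ Finset.Icc 1 j, (1 - (PowerSeries.X : PowerSeries ℝ) ^ (2 ^ i - 1)))⁻¹
      = ∏ i ∈ Finset.Icc 1 j, geom (2 ^ i - 1) := by
  rw [PowerSeries.inv_eq_iff_mul_eq_one (by rw [constCoeff_prod]; norm_num)]
  rw [mul_comm, ← Finset.prod_mul_distrib]
  apply Finset.prod_eq_one
  intro i hi
  have hi1 : 1 ≤ i := (Finset.mem_Icc.mp hi).1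
  apply geom_mul
  have : 2 ≤ 2 ^ i := by
    calc 2 = 2 ^ 1 := rfl
    _ ≤ 2 ^ i := Nat.pow_le_pow_right (by norm_num) hi1
  omega

lemma coeff_inv_prod (j m : ℕ) :
    PowerSeries.coeff m
      (∏ i ∈ Finset.Icc 1 j, (1 - (PowerSeries.X : PowerSeries ℝ) ^ (2 ^ i - 1)))⁻¹
      = ((Tset j m).card : ℝ) := by
  rw [prod_inv, PowerSeries.coeff_prod]
  have : ∀ l ∈ Finset.finsuppAntidiag (Finset.Icc 1 j) m,
      (∏ i ∈ Finset.Icc 1 j, PowerSeries.coeff (l i) (geom (2 ^ i - 1)))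
        = if (∀ i ∈ Finset.Icc 1 j, (2 ^ i - 1) ∣ l i) then (1:ℝ) else 0 := by
    intro l _
    rw [← Finset.prod_boole]
    apply Finset.prod_congr rfl
    intro i _
    rw [geom, coeff_mk]
  rw [Finset.sum_congr rfl this, Finset.sum_boole]
  rw [Tset]

lemma coeff_Abound (k n q : ℕ) :
    PowerSeries.coeff q (Abound k n)
      = ∑ j ∈ Finset.range (k+1),
          (if aexp n j ≤ q then ((Tset j (q - aexp n j)).card : ℝ) else 0) := by
  rw [Abound, map_sum]
  apply Finset.sum_congr rfl
  intro j _
  rw [show (n + 1) * (2 ^ j - 1) - 2 * j = aexp n j from rfl]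
  rw [PowerSeries.coeff_X_pow_mul']
  by_cases h : aexp n j ≤ q
  · rw [if_pos h, if_pos h, coeff_inv_prod]
  · rw [if_neg h, if_neg h]

end CUaux

namespace CUaux
open Finset

lemma getD_bound {l : List ℕ} {q : ℕ} (hdim : dimCU l = q) (i : ℕ) : l.getD i 0 < q + 2 := by
  by_cases hi : i < l.length
  · rw [List.getD_eq_getElem _ _ hi]
    have hmem : l[i] ∈ l := List.getElem_mem hi
    have : l[i] - 1 ≤ dimCU l := by
      apply List.single_le_sum (fun x _ => Nat.zero_le x)
      exact List.mem_map_of_mem hmem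
    omega
  · rw [List.getD_eq_default _ _ (by omega)]
    omega

lemma cu_finite (k n q : ℕ) : Finite {l : List ℕ // l.length ≤ k ∧ IsCU n l ∧ dimCU l = q} := by
  apply Finite.of_injective (β := Fin (k+1) × (Fin k → Fin (q+2)))
    (f := fun p => (⟨p.1.length, by have := p.2.1; omega⟩,
      fun i => ⟨p.1.getD i 0, getD_bound p.2.2.2 i⟩))
  rintro ⟨l, hl⟩ ⟨l', hl'⟩ h
  rw [Prod.mk.injEq] at h
  obtain ⟨h1, h2⟩ := h
  have hlen : l.length = l'.length := by
    have := congrArg (fun x : Fin (k+1) => (x : ℕ)) h1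
    simpa using this
  apply Subtype.ext
  apply List.ext_getElem hlen
  intro i hi1 hi2
  have hik : i < k := by omega
  have := congrFun h2 ⟨i, hik⟩
  rw [Fin.mk.injEq] at this
  rw [List.getD_eq_getElem _ _ hi1, List.getD_eq_getElem _ _ hi2] at this
  exact this

lemma cuCount_mono (n q : ℕ) : Monotone fun k => cuCount k n q := by
  intro k1 k2 hk
  have : Finite {l : List ℕ // l.length ≤ k2 ∧ IsCU n l ∧ dimCU l = q} := cu_finite k2 n q
  exact Nat.card_le_card_of_injective
    (fun p => ⟨p.1, le_trans p.2.1 hk, p.2.2⟩)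
    (by
      rintro ⟨l, hl⟩ ⟨l', hl'⟩ h
      simp only [Subtype.mk.injEq] at h
      exact Subtype.ext h)

lemma cuCount_le (k n q : ℕ) (hn : 1 ≤ n) :
    cuCount k n q ≤ ∑ j ∈ Finset.range (k+1),
      (if aexp n j ≤ q then (Tset j (q - aexp n j)).card else 0) := by
  classical
  set t : ℕ → Finset (ℕ →₀ ℕ) := fun j => if aexp n j ≤ q then Tset j (q - aexp n j) else ∅
    with ht
  set U : Finset ((_ : ℕ) × (ℕ →₀ ℕ)) := (Finset.range (k+1)).sigma t with hU
  have hcard : U.card = ∑ j ∈ Finset.range (k+1),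
      (if aexp n j ≤ q then (Tset j (q - aexp n j)).card else 0) := by
    rw [hU, Finset.card_sigma]
    apply Finset.sum_congr rfl
    intro j _
    by_cases h : aexp n j ≤ q <;> simp [ht, h]
  have hmemU : ∀ p : {l : List ℕ // l.length ≤ k ∧ IsCU n l ∧ dimCU l = q},
      (⟨p.1.length, Fmap n p.1⟩ : (_ : ℕ) × (ℕ →₀ ℕ)) ∈ U := by
    rintro ⟨l, hlk, hcu, hdim⟩
    rw [hU, Finset.mem_sigma]
    obtain ⟨-, hle⟩ := wsum_slack_eq hn hcu
    rw [hdim] at hle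
    constructor
    · simp; omega
    · rw [ht]
      simp only [if_pos hle]
      have := Fmap_mem hn hcu
      rwa [hdim] at this
  have hinj : Function.Injective
      (fun p : {l : List ℕ // l.length ≤ k ∧ IsCU n l ∧ dimCU l = q} =>
        (⟨⟨p.1.length, Fmap n p.1⟩, hmemU p⟩ : {x // x ∈ U})) := by
    rintro ⟨l, hl⟩ ⟨l', hl'⟩ h
    simp only [Subtype.mk.injEq] at h
    have h1 : l.length = l'.length := congrArg Sigma.fst h
    have h2 : Fmap n l = Fmap n l' := congrArg Sigma.snd h
    exact Subtype.ext (Fmap_inj hn hl.2.1 hl'.2.1 h1 h2)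
  calc cuCount k n q ≤ Nat.card {x // x ∈ U} := by
        have : Finite {x // x ∈ U} := inferInstance
        exact Nat.card_le_card_of_injective _ hinj
  _ = U.card := Nat.card_eq_finsetCard U
  _ = _ := hcard

end CUaux

namespace CUaux
open Finset

lemma bern (d : ℕ) (A c : ℝ) (hA : 0 ≤ A) (hc : 0 ≤ c) :
    (d+1 : ℝ) * c * A ^ d + A ^ (d+1) ≤ (A + c) ^ (d+1) := by
  induction d with
  | zero => simp; nlinarith
  | succ d ih =>
    have key := mul_le_mul_of_nonneg_left ih (add_nonneg hA hc)
    have hd : (0:ℝ) ≤ (d:ℝ) := Nat.cast_nonneg d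
    have h3 : (0:ℝ) ≤ c * c * A ^ d := by positivity
    have h4 : (0:ℝ) ≤ (d:ℝ) * (c * c * A ^ d) := mul_nonneg hd h3
    have e1 : (A + c) ^ (d+1+1) = (A + c) * (A + c) ^ (d+1) := by ring
    have e2 : A ^ (d+1) = A ^ d * A := pow_succ A d
    have e3 : A ^ (d+1+1) = A ^ d * A * A := by rw [pow_succ, e2]
    push_cast
    rw [e3, e1, e2]
    rw [e2] at key
    nlinarith [key, h3, h4]

def ww (i : ℕ) : ℕ := 2 ^ (i+2) - 1
def Cw (d : ℕ) : ℕ := ∑ i ∈ Finset.range d, ww i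
def Pw (d : ℕ) : ℕ := ∏ i ∈ Finset.range d, ww i

lemma ww_pos (i : ℕ) : 1 ≤ ww i := by
  have : 4 ≤ 2 ^ (i+2) := by
    calc (4:ℕ) = 2 ^ 2 := rfl
    _ ≤ 2 ^ (i+2) := Nat.pow_le_pow_right (by norm_num) (by omega)
  rw [ww]; omega

lemma Pw_pos (d : ℕ) : 0 < Pw d := Finset.prod_pos (fun i _ => ww_pos i)

def Dset (d m : ℕ) : Finset (Fin d → ℕ) :=
  (Fintype.piFinset fun _ => Finset.range (m+1)).filter
    (fun r => ∑ i : Fin d, ww (i:ℕ) * r i ≤ m)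

lemma mem_Dset {d m : ℕ} {r : Fin d → ℕ} :
    r ∈ Dset d m ↔ ∑ i : Fin d, ww (i:ℕ) * r i ≤ m := by
  rw [Dset, Finset.mem_filter]
  constructor
  · exact fun h => h.2
  · intro h
    refine ⟨?_, h⟩
    rw [Fintype.mem_piFinset]
    intro i
    rw [Finset.mem_range]
    have h1 : ww (i:ℕ) * r i ≤ m := le_trans
      (Finset.single_le_sum (f := fun i : Fin d => ww (i:ℕ) * r i)
        (fun _ _ => Nat.zero_le _) (Finset.mem_univ i)) h
    have h2 : r i ≤ ww (i:ℕ) * r i := Nat.le_mul_of_pos_left _ (ww_pos i)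
    omega

lemma telescope (d w C m : ℕ) (hw : 1 ≤ w) :
    (∑ t ∈ Finset.range (m / w + 1), (((m - w * t : ℕ) : ℝ) + C) ^ d) * ((d+1 : ℝ) * w)
      ≤ ((m : ℝ) + C + w) ^ (d+1) := by
  set T := m / w with hT
  set u : ℕ → ℝ := fun t => ((m:ℝ) + C + w - w * t) ^ (d+1) with hu
  have key : ∀ t ∈ Finset.range (T+1),
      (((m - w * t : ℕ) : ℝ) + C) ^ d * ((d+1 : ℝ) * w) ≤ u t - u (t+1) := by
    intro t ht
    have htT : t ≤ T := by
      rw [Finset.mem_range] at ht; omega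
    have hwt : w * t ≤ m := by
      rw [Nat.mul_comm]
      exact (Nat.le_div_iff_mul_le (by omega : 0 < w)).mp htT
    have hcast : ((m - w * t : ℕ) : ℝ) = (m:ℝ) - w * t := by
      push_cast [hwt]; ring
    have h1 : (m:ℝ) + C + w - w * t = (((m:ℝ) - w*t + C) + w) := by ring
    have h2 : (m:ℝ) + C + w - w * (t+1:ℕ) = ((m:ℝ) - w*t + C) := by push_cast; ring
    rw [hu]
    simp only []
    rw [h1, h2, hcast]
    have hA : (0:ℝ) ≤ (m:ℝ) - w*t + C := by
      rw [← hcast]; positivity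
    have := bern d ((m:ℝ) - w*t + C) w hA (by positivity)
    linarith
  calc (∑ t ∈ Finset.range (T+1), (((m - w * t : ℕ) : ℝ) + C) ^ d) * ((d+1 : ℝ) * w)
      = ∑ t ∈ Finset.range (T+1), ((((m - w * t : ℕ) : ℝ) + C) ^ d * ((d+1 : ℝ) * w)) := by
        rw [Finset.sum_mul]
  _ ≤ ∑ t ∈ Finset.range (T+1), (u t - u (t+1)) := Finset.sum_le_sum key
  _ = u 0 - u (T+1) := Finset.sum_range_sub' u (T+1)
  _ ≤ u 0 := by
      have hwT : w * T ≤ m := by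
        rw [Nat.mul_comm]
        exact (Nat.le_div_iff_mul_le (by omega : 0 < w)).mp (le_refl T)
      have : (0:ℝ) ≤ u (T+1) := by
        rw [hu]
        simp only []
        apply pow_nonneg
        push_cast
        have : (w:ℝ) * T ≤ m := by exact_mod_cast hwT
        linarith
      linarith
  _ = ((m : ℝ) + C + w) ^ (d+1) := by rw [hu]; simp

lemma dset_card : ∀ d m : ℕ, ((Dset d m).card : ℝ)
    ≤ ((m:ℝ) + Cw d) ^ d / ((Nat.factorial d : ℝ) * (Pw d)) := by
  intro d
  induction d with
  | zero =>
    intro m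
    have h1 : (Dset 0 m).card ≤ 1 :=
      Finset.card_le_one.mpr (fun a _ b _ => Subsingleton.elim a b)
    have : ((Dset 0 m).card : ℝ) ≤ 1 := by exact_mod_cast h1
    simpa [Cw, Pw, Nat.factorial] using this
  | succ d ih =>
    intro m
    set w := ww d with hwdef
    have hw : 1 ≤ w := ww_pos d
    have hstep : (Dset (d+1) m).card ≤ ∑ t ∈ Finset.range (m / w + 1), (Dset d (m - w * t)).card := by
      rw [← Finset.card_sigma]
      apply Finset.card_le_card_of_injOn
        (fun r => (⟨r (Fin.last d), Fin.init r⟩ : (_ : ℕ) × (Fin d → ℕ)))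
      · intro r hr
        rw [Finset.mem_coe, mem_Dset] at hr
        have hsum : ∑ i : Fin (d+1), ww (i:ℕ) * r i
            = (∑ i : Fin d, ww (i:ℕ) * (Fin.init r) i) + w * r (Fin.last d) := by
          rw [Fin.sum_univ_castSucc]
          congr 1
        rw [Finset.mem_coe, Finset.mem_sigma]
        dsimp only
        constructor
        · rw [Finset.mem_range]
          have h5 : r (Fin.last d) * w ≤ m := by rw [Nat.mul_comm]; omega
          have h6 : r (Fin.last d) ≤ m / w :=
            (Nat.le_div_iff_mul_le (by omega : 0 < w)).mpr h5
          omega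
        · rw [mem_Dset]
          omega
      · intro r hr r' hr' h
        have h1 : r (Fin.last d) = r' (Fin.last d) := congrArg Sigma.fst h
        have h2 : Fin.init r = Fin.init r' := congrArg Sigma.snd h
        have := Fin.snoc_init_self r
        rw [← Fin.snoc_init_self r, ← Fin.snoc_init_self r', h1, h2]
    have hfac : (0:ℝ) < (Nat.factorial d : ℝ) * (Pw d) := by
      have := Nat.factorial_pos d
      have := Pw_pos d
      positivity
    calc ((Dset (d+1) m).card : ℝ)
        ≤ ∑ t ∈ Finset.range (m / w + 1), ((Dset d (m - w * t)).card : ℝ) := by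
          exact_mod_cast hstep
    _ ≤ ∑ t ∈ Finset.range (m / w + 1),
          (((m - w * t : ℕ) : ℝ) + Cw d) ^ d / ((Nat.factorial d : ℝ) * (Pw d)) :=
        Finset.sum_le_sum (fun t _ => ih (m - w * t))
    _ = (∑ t ∈ Finset.range (m / w + 1), (((m - w * t : ℕ) : ℝ) + Cw d) ^ d)
          / ((Nat.factorial d : ℝ) * (Pw d)) := by rw [Finset.sum_div]
    _ ≤ (((m:ℝ) + Cw d + w) ^ (d+1) / ((d+1 : ℝ) * w)) / ((Nat.factorial d : ℝ) * (Pw d)) := by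
        have hpos : (0:ℝ) < (d+1 : ℝ) * w := by positivity
        apply (div_le_div_iff_of_pos_right hfac).mpr
        rw [le_div_iff₀ hpos]
        exact telescope d w (Cw d) m hw
    _ = ((m:ℝ) + Cw (d+1)) ^ (d+1) / ((Nat.factorial (d+1) : ℝ) * (Pw (d+1))) := by
        have hCw : Cw (d+1) = Cw d + w := by rw [Cw, Finset.sum_range_succ, Cw]
        have hPw : Pw (d+1) = Pw d * w := by rw [Pw, Finset.prod_range_succ, Pw]
        have hfac2 : Nat.factorial (d+1) = (d+1) * Nat.factorial d := rfl
        rw [hCw, hPw, hfac2]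
        have hww : (0:ℝ) < w := by exact_mod_cast hw
        have h1 : (0:ℝ) < (Nat.factorial d : ℝ) := by exact_mod_cast Nat.factorial_pos d
        have h2 : (0:ℝ) < (Pw d : ℝ) := by exact_mod_cast Pw_pos d
        have hne1 : ((d:ℝ)+1) * w ≠ 0 := by positivity
        have hne2 : (Nat.factorial d : ℝ) ≠ 0 := by positivity
        have hne3 : (Pw d : ℝ) ≠ 0 := by
          have := Pw_pos d
          positivity
        push_cast
        field_simp
        ring
end CUaux

namespace CUaux
open Finset

lemma Cw_closed (d : ℕ) : Cw d + 4 + d = 2 ^ (d+2) := by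
  induction d with
  | zero => simp [Cw]
  | succ d ih =>
    have h1 : Cw (d+1) = Cw d + ww d := by rw [Cw, Finset.sum_range_succ, Cw]
    have h2 : 2 ^ (d+1+2) = 2 * 2 ^ (d+2) := by ring
    have h3 : 1 ≤ 2 ^ (d+2) := Nat.one_le_two_pow
    rw [h1, ww, h2]
    omega

lemma Icc_split (j : ℕ) (hj : 1 ≤ j) :
    Finset.Icc 1 j = insert 1 (Finset.Icc 2 j) := by
  ext x
  simp only [Finset.mem_Icc, Finset.mem_insert]
  omega

lemma tset_le (j m : ℕ) (hj : 1 ≤ j) : (Tset j m).card ≤ (Dset (j-1) m).card := by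
  apply Finset.card_le_card_of_injOn
    (fun f => fun i : Fin (j-1) => f ((i:ℕ)+2) / (2 ^ ((i:ℕ)+2) - 1))
  · intro f hf
    rw [Finset.mem_coe, Tset, Finset.mem_filter, Finset.mem_finsuppAntidiag] at hf
    obtain ⟨⟨hsum, hsupp⟩, hdvd⟩ := hf
    rw [Finset.mem_coe, mem_Dset]
    have hdv : ∀ i : Fin (j-1),
        ww (i:ℕ) * (f ((i:ℕ)+2) / (2 ^ ((i:ℕ)+2) - 1)) = f ((i:ℕ)+2) := by
      intro i
      have hi2 : (i:ℕ) + 2 ∈ Finset.Icc 1 j := by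
        have := i.isLt
        rw [Finset.mem_Icc]
        omega
      rw [ww]
      exact Nat.mul_div_cancel' (hdvd _ hi2)
    calc ∑ i : Fin (j-1), ww (i:ℕ) * (f ((i:ℕ)+2) / (2 ^ ((i:ℕ)+2) - 1))
        = ∑ i : Fin (j-1), f ((i:ℕ)+2) := Finset.sum_congr rfl (fun i _ => hdv i)
    _ = ∑ i ∈ Finset.range (j-1), f (i+2) := Fin.sum_univ_eq_sum_range (fun i => f (i+2)) (j-1)
    _ = ∑ i ∈ Finset.Ico 2 (j+1), f i := by
        rw [Finset.sum_Ico_eq_sum_range]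
        have h1 : j + 1 - 2 = j - 1 := by omega
        rw [h1]
        exact Finset.sum_congr rfl (fun i _ => by rw [Nat.add_comm])
    _ ≤ ∑ i ∈ Finset.Icc 1 j, f i := Finset.sum_le_sum_of_subset (by
        intro x hx
        rw [Finset.mem_Ico] at hx
        rw [Finset.mem_Icc]
        omega)
    _ = m := hsum
  · intro f hf g hg h
    rw [Finset.mem_coe, Tset, Finset.mem_filter, Finset.mem_finsuppAntidiag] at hf hg
    obtain ⟨⟨hfs, hfsupp⟩, hfd⟩ := hf
    obtain ⟨⟨hgs, hgsupp⟩, hgd⟩ := hg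
    have h2 : ∀ i ∈ Finset.Icc 2 j, f i = g i := by
      intro i hi
      rw [Finset.mem_Icc] at hi
      have hidx : i - 2 < j - 1 := by omega
      have hteq := congrFun h ⟨i - 2, hidx⟩
      dsimp only at hteq
      have hrw : (i - 2) + 2 = i := by omega
      rw [hrw] at hteq
      have hfi : f i = (2 ^ i - 1) * (f i / (2 ^ i - 1)) :=
        (Nat.mul_div_cancel' (hfd i (by rw [Finset.mem_Icc]; omega))).symm
      have hgi : g i = (2 ^ i - 1) * (g i / (2 ^ i - 1)) :=
        (Nat.mul_div_cancel' (hgd i (by rw [Finset.mem_Icc]; omega))).symm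
      rw [hfi, hgi, hteq]
    have hsum2 : ∑ i ∈ Finset.Icc 2 j, f i = ∑ i ∈ Finset.Icc 2 j, g i :=
      Finset.sum_congr rfl h2
    have h1 : f 1 = g 1 := by
      rw [Icc_split j hj, Finset.sum_insert (by simp)] at hfs hgs
      omega
    apply Finsupp.ext
    intro i
    by_cases hi : i ∈ Finset.Icc 1 j
    · rw [Finset.mem_Icc] at hi
      rcases Nat.eq_or_lt_of_le hi.1 with h' | h'
      · rw [← h']
        exact h1
      · exact h2 i (by rw [Finset.mem_Icc]; omega)
    · have hf0 : f i = 0 := Finsupp.notMem_support_iff.mp (fun hc => hi (hfsupp hc))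
      have hg0 : g i = 0 := Finsupp.notMem_support_iff.mp (fun hc => hi (hgsupp hc))
      rw [hf0, hg0]

lemma term_bound (n q j : ℕ) (hn3 : 3 ≤ n) (hj : 1 ≤ j) (hle : aexp n j ≤ q) :
    ((Tset j (q - aexp n j)).card : ℝ)
      ≤ (q:ℝ) ^ (j-1) / ((Nat.factorial (j-1) : ℝ) * 2 ^ (j * (j-1) / 2)) := by
  set d := j - 1 with hd
  set m := q - aexp n j with hm
  have hMq : m + Cw d ≤ q := by
    have hC := Cw_closed d
    have hax := aexp_add n j (by omega)
    have hpow : 2 ^ (d+2) = 2 * 2 ^ j := by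
      have h : d + 2 = j + 1 := by omega
      rw [h]
      ring
    have hjp : j < 2 ^ j := (Nat.lt_two_pow_self (n := j))
    have hmul : 4 * (2 ^ j - 1) ≤ (n+1) * (2 ^ j - 1) := Nat.mul_le_mul_right _ (by omega)
    omega
  have hkey : (m + Cw d) ^ d * 2 ^ (j * d / 2) ≤ q ^ d * Pw d := by
    have hE : 2 ^ (j * d / 2) = ∏ i ∈ Finset.range d, 2 ^ (i+1) := by
      rw [Finset.prod_pow_eq_pow_sum]
      congr 1
      have h2 : (∑ i ∈ Finset.range d, (i+1)) * 2 = d * (d+1) := by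
        induction d with
        | zero => simp
        | succ e ihe =>
          rw [Finset.sum_range_succ, Nat.add_mul, ihe]
          ring
      have h3 : j * d = d * (d+1) := by
        have h : j = d + 1 := by omega
        rw [h]
        ring
      omega
    rw [hE]
    calc (m + Cw d) ^ d * ∏ i ∈ Finset.range d, 2 ^ (i+1)
        = ∏ i ∈ Finset.range d, ((m + Cw d) * 2 ^ (i+1)) := by
          rw [Finset.prod_mul_distrib, Finset.prod_const, Finset.card_range]
    _ ≤ ∏ i ∈ Finset.range d, (q * ww i) := Finset.prod_le_prod' (fun i _ => by
          apply Nat.mul_le_mul hMq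
          have h4 : 2 ^ (i+2) = 2 * 2 ^ (i+1) := by ring
          have h5 : 1 ≤ 2 ^ (i+1) := Nat.one_le_two_pow
          rw [ww]
          omega)
    _ = q ^ d * Pw d := by
          rw [Finset.prod_mul_distrib, Finset.prod_const, Finset.card_range, Pw]
  have hposE : (0:ℝ) < (Nat.factorial d : ℝ) * 2 ^ (j * d / 2) := by positivity
  have hposP : (0:ℝ) < (Nat.factorial d : ℝ) * (Pw d) := by
    have h6 : 0 < Pw d := Pw_pos d
    have h7 := Nat.factorial_pos d
    positivity
  calc ((Tset j m).card : ℝ) ≤ ((Dset d m).card : ℝ) := by exact_mod_cast tset_le j m hj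
  _ ≤ ((m:ℝ) + Cw d) ^ d / ((Nat.factorial d : ℝ) * (Pw d)) := dset_card d m
  _ ≤ (q:ℝ) ^ d / ((Nat.factorial d : ℝ) * 2 ^ (j * d / 2)) := by
      rw [div_le_div_iff₀ hposP hposE]
      have hcast : ((m:ℝ) + Cw d) = ((m + Cw d : ℕ) : ℝ) := by push_cast; ring
      rw [hcast]
      calc ((m + Cw d : ℕ):ℝ) ^ d * ((Nat.factorial d : ℝ) * 2 ^ (j * d / 2))
          = (Nat.factorial d : ℝ) * (((m + Cw d : ℕ):ℝ) ^ d * 2 ^ (j * d / 2)) := by ring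
      _ ≤ (Nat.factorial d : ℝ) * ((q:ℝ) ^ d * (Pw d)) := by
          apply mul_le_mul_of_nonneg_left ?_ (by positivity)
          exact_mod_cast hkey
      _ = (q:ℝ) ^ d * ((Nat.factorial d : ℝ) * Pw d) := by ring

lemma tset_zero (q : ℕ) (hq : 1 ≤ q) : Tset 0 q = ∅ := by
  ext f
  simp only [Tset, Finset.mem_filter, Finset.mem_finsuppAntidiag, Finset.notMem_empty,
    iff_false, not_and]
  intro h
  exfalso
  obtain ⟨hsum, hsupp⟩ := h
  rw [Finset.Icc_eq_empty (by omega : ¬ (1:ℕ) ≤ 0)] at hsum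
  simp at hsum
  omega

lemma part3 (n k q : ℕ) (hn3 : 3 ≤ n) (hq : 1 ≤ q) :
    ∑ j ∈ Finset.range (k+1),
        (if aexp n j ≤ q then ((Tset j (q - aexp n j)).card : ℝ) else 0)
      ≤ ∑ j ∈ Finset.Icc 1 k,
          (q:ℝ) ^ (j-1) / ((Nat.factorial (j-1) : ℝ) * 2 ^ (j * (j-1) / 2)) := by
  rw [show Finset.range (k+1) = insert 0 (Finset.Icc 1 k) by ext x; simp; omega]
  rw [Finset.sum_insert (by simp)]
  have h0 : (if aexp n 0 ≤ q then ((Tset 0 (q - aexp n 0)).card : ℝ) else 0) = 0 := by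
    have ha0 : aexp n 0 = 0 := by simp [aexp]
    rw [ha0, if_pos (Nat.zero_le q), Nat.sub_zero, tset_zero q hq]
    simp
  rw [h0, zero_add]
  apply Finset.sum_le_sum
  intro j hj
  rw [Finset.mem_Icc] at hj
  by_cases hle : aexp n j ≤ q
  · rw [if_pos hle]
    exact term_bound n q j hn3 hj.1 hle
  · rw [if_neg hle]
    positivity

end CUaux

/-- The count of completely unadmissible sequences of excess `n` and length at most `k`
in dimension `q` is non-decreasing in `k`, is dominated by the coefficient of `t^q` in
the closed form `Σ_{j=0}^k t^{(n+1)(2^j−1)−2j}·∏_{i=1}^j (1−t^{2^i−1})^{−1}`, and for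
`n ≥ 3`, `q ≥ 1` this coefficient is at most `Σ_{j=1}^k q^{j−1}/((j−1)!·2^{j(j−1)/2})`. -/
theorem cuCount_bounds (n k q : ℕ) (hn : 1 ≤ n) :
    (Monotone fun k => cuCount k n q) ∧
    ((cuCount k n q : ℝ) ≤ PowerSeries.coeff q (Abound k n)) ∧
    (3 ≤ n → 1 ≤ q → PowerSeries.coeff q (Abound k n) ≤
      ∑ j ∈ Finset.Icc 1 k,
        (q : ℝ) ^ (j - 1) / ((Nat.factorial (j - 1) : ℝ) * 2 ^ (j * (j - 1) / 2))) := by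
  refine ⟨CUaux.cuCount_mono n q, ?_, ?_⟩
  · rw [CUaux.coeff_Abound]
    have hle := CUaux.cuCount_le k n q hn
    have hcast : ((∑ j ∈ Finset.range (k+1),
        if CUaux.aexp n j ≤ q then (CUaux.Tset j (q - CUaux.aexp n j)).card else 0 : ℕ) : ℝ)
        = ∑ j ∈ Finset.range (k+1),
            (if CUaux.aexp n j ≤ q then ((CUaux.Tset j (q - CUaux.aexp n j)).card : ℝ) else 0) := by
      push_cast
      apply Finset.sum_congr rfl
      intro j _
      split_ifs <;> simp
    rw [← hcast]
    exact_mod_cast hle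
  · intro hn3 hq
    rw [CUaux.coeff_Abound]
    exact CUaux.part3 n k q hn3 hq
end
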